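/- arXiv:1405.6374 — 10 statements merged into one kernel-verified Lean document; each statement's English description precedes it below -/
import Mathlib

section
/- If the QMS is irreducible, then its invariant state is unique: whenever ρ₁ and ρ₂ are positive semidefinite matrices of trace 1 with 𝓛_*(ρ₁) = 0 and 𝓛_*(ρ₂) = 0, one has ρ₁ = ρ₂. -/
open Matrix
open scoped ComplexOrder
open scoped MatrixOrder

private lemma star_dot_mulVec' {d : ℕ} (M : Matrix (Fin d) (Fin d) ℂ) (k w : Fin d → ℂ) :
    star k ⬝ᵥ (M *ᵥ w) = star (Mᴴ *ᵥ k) ⬝ᵥ w := by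
  rw [dotProduct_mulVec, star_mulVec, conjTranspose_conjTranspose]

private lemma sum_mulVec' {d m : ℕ} (A : Fin m → Matrix (Fin d) (Fin d) ℂ) (v : Fin d → ℂ) :
    (∑ ℓ, A ℓ) *ᵥ v = ∑ ℓ, A ℓ *ᵥ v := by
  ext i
  simp [Matrix.mulVec, dotProduct, Matrix.sum_apply, Finset.sum_mul]
  rw [Finset.sum_comm]

private lemma dotProduct_sum' {d m : ℕ} (v : Fin d → ℂ) (f : Fin m → Fin d → ℂ) :
    v ⬝ᵥ (∑ ℓ, f ℓ) = ∑ ℓ, v ⬝ᵥ f ℓ := by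
  simp [dotProduct, Finset.sum_apply, Finset.mul_sum]
  rw [Finset.sum_comm]

private lemma single_form' {d : ℕ} (A : Matrix (Fin d) (Fin d) ℂ) (i : Fin d) :
    star (Pi.single i (1:ℂ)) ⬝ᵥ (A *ᵥ Pi.single i 1) = A i i := by
  simp [dotProduct, Matrix.mulVec_single, Pi.single_apply, apply_ite]

private lemma psd_trace_zero {d : ℕ} {A : Matrix (Fin d) (Fin d) ℂ}
    (hA : A.PosSemidef) (h : A.trace = 0) : A = 0 := by
  have hsum : ∑ i, A i i = 0 := by rwa [Matrix.trace] at h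
  have hdiag : ∀ i, A i i = 0 := fun i =>
    (Finset.sum_eq_zero_iff_of_nonneg (fun j _ => by
      rw [← single_form' A j]; exact hA.dotProduct_mulVec_nonneg _)).mp hsum i (Finset.mem_univ i)
  ext i j
  have hcol : A *ᵥ Pi.single j 1 = 0 := by
    refine (hA.dotProduct_mulVec_zero_iff _).mp ?_
    rw [single_form', hdiag j]
  have := congrFun hcol i
  simpa [Matrix.mulVec_single] using this

/-- Any invariant PSD matrix with nonzero trace of an irreducible QMS has trivial kernel. -/
private lemma invariant_ker_trivial {d m : ℕ}
    (L : Fin m → Matrix (Fin d) (Fin d) ℂ) (G : Matrix (Fin d) (Fin d) ℂ)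
    (hirr : ∀ V : Submodule ℂ (Fin d → ℂ),
      (∀ v ∈ V, G *ᵥ v ∈ V) → (∀ ℓ, ∀ v ∈ V, L ℓ *ᵥ v ∈ V) → V = ⊥ ∨ V = ⊤)
    (ρ : Matrix (Fin d) (Fin d) ℂ) (hpos : ρ.PosSemidef)
    (hinv : G * ρ + ∑ ℓ, L ℓ * ρ * (L ℓ)ᴴ + ρ * Gᴴ = 0)
    (htr : ρ.trace ≠ 0) :
    ∀ v, ρ *ᵥ v = 0 → v = 0 := by
  have hherm : ρᴴ = ρ := hpos.isHermitian
  have step1 : ∀ k, ρ *ᵥ k = 0 → ∀ ℓ, ρ *ᵥ ((L ℓ)ᴴ *ᵥ k) = 0 := by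
    intro k hk
    have h0 : star k ⬝ᵥ ((G * ρ + ∑ ℓ, L ℓ * ρ * (L ℓ)ᴴ + ρ * Gᴴ) *ᵥ k) = 0 := by
      rw [hinv]; simp
    rw [add_mulVec, add_mulVec, dotProduct_add, dotProduct_add] at h0
    have t1 : star k ⬝ᵥ ((G * ρ) *ᵥ k) = 0 := by
      rw [← mulVec_mulVec, hk, mulVec_zero, dotProduct_zero]
    have t3 : star k ⬝ᵥ ((ρ * Gᴴ) *ᵥ k) = 0 := by
      rw [← mulVec_mulVec, star_dot_mulVec' ρ, hherm, hk]
      simp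
    rw [t1, t3, zero_add, add_zero, sum_mulVec', dotProduct_sum'] at h0
    have hterm : ∀ ℓ : Fin m,
        star k ⬝ᵥ ((L ℓ * ρ * (L ℓ)ᴴ) *ᵥ k)
          = star ((L ℓ)ᴴ *ᵥ k) ⬝ᵥ (ρ *ᵥ ((L ℓ)ᴴ *ᵥ k)) := by
      intro ℓ
      rw [← mulVec_mulVec, ← mulVec_mulVec, star_dot_mulVec' (L ℓ)]
    intro ℓ
    have hz : star ((L ℓ)ᴴ *ᵥ k) ⬝ᵥ (ρ *ᵥ ((L ℓ)ᴴ *ᵥ k)) = 0 := by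
      have := (Finset.sum_eq_zero_iff_of_nonneg (fun j _ => by
        rw [hterm j]; exact hpos.dotProduct_mulVec_nonneg _)).mp h0 ℓ (Finset.mem_univ ℓ)
      rw [hterm ℓ] at this; exact this
    exact (hpos.dotProduct_mulVec_zero_iff _).mp hz
  have step2 : ∀ k, ρ *ᵥ k = 0 → ρ *ᵥ (Gᴴ *ᵥ k) = 0 := by
    intro k hk
    have h0 := congrArg (fun M => M *ᵥ k) hinv
    simp only [add_mulVec, zero_mulVec, sum_mulVec'] at h0
    rw [← mulVec_mulVec, hk, mulVec_zero] at h0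
    have hmid : (∑ ℓ, (L ℓ * ρ * (L ℓ)ᴴ) *ᵥ k) = 0 := by
      refine Finset.sum_eq_zero fun ℓ _ => ?_
      rw [← mulVec_mulVec, ← mulVec_mulVec, step1 k hk ℓ, mulVec_zero]
    rw [hmid, zero_add, zero_add, ← mulVec_mulVec] at h0
    exact h0
  set V : Submodule ℂ (Fin d → ℂ) :=
    { carrier := {v | ∀ k, ρ *ᵥ k = 0 → star k ⬝ᵥ v = 0}
      add_mem' := fun {a b} ha hb k hk => by
        rw [dotProduct_add, ha k hk, hb k hk, add_zero]
      zero_mem' := fun k _ => by simp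
      smul_mem' := fun c v hv k hk => by
        rw [dotProduct_smul, hv k hk, smul_zero] } with hV
  have hGV : ∀ v ∈ V, G *ᵥ v ∈ V := by
    intro v hv k hk
    rw [star_dot_mulVec']
    exact hv _ (step2 k hk)
  have hLV : ∀ ℓ, ∀ v ∈ V, L ℓ *ᵥ v ∈ V := by
    intro ℓ v hv k hk
    rw [star_dot_mulVec']
    exact hv _ (step1 k hk ℓ)
  rcases hirr V hGV hLV with hbot | htop
  · exfalso
    apply htr
    have hρ0 : ρ = 0 := by
      have hx : ∀ x, ρ *ᵥ x = 0 := by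
        intro x
        have hmem : ρ *ᵥ x ∈ V := by
          intro k hk
          rw [star_dot_mulVec', hherm, hk]
          simp
        rw [hbot] at hmem
        simpa using hmem
      ext i j
      have := congrFun (hx (Pi.single j 1)) i
      simpa [Matrix.mulVec_single] using this
    rw [hρ0]; simp
  · intro v hv
    have hvV : v ∈ V := by rw [htop]; trivial
    exact dotProduct_star_self_eq_zero.mp (hvV v hv)

/-- an irreducible QMS has a unique invariant state: if the only
subspaces of `ℂ^d` invariant under `G` and every `L ℓ` are `{0}` and `ℂ^d`, and
`ρ₁, ρ₂` are positive semidefinite matrices of trace `1` with `𝓛_*(ρᵢ) = 0`,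
then `ρ₁ = ρ₂`. -/
theorem irreducible_invariant_state_unique {d m : ℕ} (hd : 1 ≤ d) (hm : 1 ≤ m)
    (H : Matrix (Fin d) (Fin d) ℂ) (hH : H.IsHermitian)
    (L : Fin m → Matrix (Fin d) (Fin d) ℂ) (G : Matrix (Fin d) (Fin d) ℂ)
    (hG : G = (-(1/2 : ℂ)) • ∑ ℓ, (L ℓ)ᴴ * L ℓ - Complex.I • H)
    (hirr : ∀ V : Submodule ℂ (Fin d → ℂ),
      (∀ v ∈ V, G *ᵥ v ∈ V) → (∀ ℓ, ∀ v ∈ V, L ℓ *ᵥ v ∈ V) → V = ⊥ ∨ V = ⊤)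
    (ρ₁ ρ₂ : Matrix (Fin d) (Fin d) ℂ)
    (h₁pos : ρ₁.PosSemidef) (h₁tr : ρ₁.trace = 1)
    (h₁inv : G * ρ₁ + ∑ ℓ, L ℓ * ρ₁ * (L ℓ)ᴴ + ρ₁ * Gᴴ = 0)
    (h₂pos : ρ₂.PosSemidef) (h₂tr : ρ₂.trace = 1)
    (h₂inv : G * ρ₂ + ∑ ℓ, L ℓ * ρ₂ * (L ℓ)ᴴ + ρ₂ * Gᴴ = 0) :
    ρ₁ = ρ₂ := by
  classical
  have h2ker : ∀ v, ρ₂ *ᵥ v = 0 → v = 0 :=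
    invariant_ker_trivial L G hirr ρ₂ h₂pos h₂inv (by rw [h₂tr]; exact one_ne_zero)
  set S := CFC.sqrt ρ₂ with hSdef
  have hS : S.PosSemidef := (CFC.sqrt_nonneg ρ₂).posSemidef
  have hS2 : S * S = ρ₂ := by rw [← pow_two]; exact CFC.sq_sqrt ρ₂ h₂pos.nonneg
  have hdet2 : ρ₂.det ≠ 0 := by
    intro h
    obtain ⟨v, hv0, hv⟩ := (Matrix.exists_mulVec_eq_zero_iff).mpr h
    exact hv0 (h2ker v hv)
  have hdetS : IsUnit S.det := by
    rw [← hS2, det_mul] at hdet2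
    exact IsUnit.mk0 _ (fun h => hdet2 (by rw [h, zero_mul]))
  have hSS : S * S⁻¹ = 1 := mul_nonsing_inv S hdetS
  have hSS' : S⁻¹ * S = 1 := nonsing_inv_mul S hdetS
  set A := S⁻¹ * ρ₁ * S⁻¹ with hAdef
  have hSinv : (S⁻¹).PosSemidef := hS.inv
  have hApsd : A.PosSemidef := by
    have h := h₁pos.conjTranspose_mul_mul_same (B := S⁻¹)
    rwa [show (S⁻¹)ᴴ = S⁻¹ from hSinv.isHermitian] at h
  have hAH : A.IsHermitian := hApsd.isHermitian
  obtain ⟨i₀, -, hmin⟩ :=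
    Finset.exists_min_image Finset.univ hAH.eigenvalues ⟨⟨0, hd⟩, Finset.mem_univ _⟩
  set t := hAH.eigenvalues i₀ with htdef
  set B := A - (t:ℂ) • 1 with hBdef
  -- B is positive semidefinite via the spectral theorem
  have hBpsd : B.PosSemidef := by
    set U : Matrix (Fin d) (Fin d) ℂ := ((Matrix.IsHermitian.eigenvectorUnitary hAH :
      Matrix.unitaryGroup (Fin d) ℂ) : Matrix (Fin d) (Fin d) ℂ) with hUdef
    have hUU : U * star U = 1 :=
      (Matrix.mem_unitaryGroup_iff).mp (Matrix.IsHermitian.eigenvectorUnitary hAH).2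
    have hB1 : B = U * (Matrix.diagonal (fun i => ((hAH.eigenvalues i - t : ℝ) : ℂ))) * star U := by
      have hspec := hAH.spectral_theorem
      have htU : (t:ℂ) • (1 : Matrix (Fin d) (Fin d) ℂ)
          = U * ((t:ℂ) • (1 : Matrix (Fin d) (Fin d) ℂ)) * star U := by
        rw [Matrix.mul_smul, Matrix.smul_mul, mul_one, hUU]
      rw [hBdef]
      conv_lhs => rw [hspec, Unitary.conjStarAlgAut_apply, htU]
      rw [← Matrix.sub_mul, ← Matrix.mul_sub]
      congr 2
      rw [smul_one_eq_diagonal, Matrix.diagonal_sub]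
      congr 1
      funext i
      simp [Function.comp]
    rw [hB1, Matrix.star_eq_conjTranspose]
    exact (Matrix.posSemidef_diagonal_iff.mpr (fun i =>
      Complex.zero_le_real.mpr (sub_nonneg.mpr (hmin i (Finset.mem_univ i))))
      ).mul_mul_conjTranspose_same U
  -- σ = ρ₁ - t • ρ₂ equals S * B * S
  have hσSBS : ρ₁ - (t:ℂ) • ρ₂ = S * B * S := by
    rw [hBdef, hAdef]
    rw [Matrix.mul_sub, Matrix.sub_mul, Matrix.mul_smul, Matrix.smul_mul, mul_one]
    have h1 : S * (S⁻¹ * ρ₁ * S⁻¹) * S = (S * S⁻¹) * ρ₁ * (S⁻¹ * S) := by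
      simp only [Matrix.mul_assoc]
    rw [h1, hSS, hSS', one_mul, mul_one, hS2]
  have hσpsd : (ρ₁ - (t:ℂ) • ρ₂).PosSemidef := by
    rw [hσSBS]
    have h := hBpsd.conjTranspose_mul_mul_same (B := S)
    rwa [show Sᴴ = S from hS.isHermitian] at h
  have hσinv : G * (ρ₁ - (t:ℂ) • ρ₂) + ∑ ℓ, L ℓ * (ρ₁ - (t:ℂ) • ρ₂) * (L ℓ)ᴴ
      + (ρ₁ - (t:ℂ) • ρ₂) * Gᴴ = 0 := by
    have key : G * (ρ₁ - (t:ℂ) • ρ₂) + ∑ ℓ, L ℓ * (ρ₁ - (t:ℂ) • ρ₂) * (L ℓ)ᴴ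
        + (ρ₁ - (t:ℂ) • ρ₂) * Gᴴ
        = (G * ρ₁ + ∑ ℓ, L ℓ * ρ₁ * (L ℓ)ᴴ + ρ₁ * Gᴴ)
          - (t:ℂ) • (G * ρ₂ + ∑ ℓ, L ℓ * ρ₂ * (L ℓ)ᴴ + ρ₂ * Gᴴ) := by
      simp only [Matrix.mul_sub, Matrix.sub_mul, Matrix.mul_smul, Matrix.smul_mul,
        smul_add, Finset.sum_sub_distrib, smul_sub, Finset.smul_sum]
      abel
    rw [key, h₁inv, h₂inv, smul_zero, sub_zero]
  -- eigenvector of A for the minimal eigenvalue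
  have hu := hAH.mulVec_eigenvectorBasis i₀
  set u : Fin d → ℂ := ⇑(hAH.eigenvectorBasis i₀) with hudef
  have hu0 : u ≠ 0 := by
    intro h
    exact hAH.eigenvectorBasis.orthonormal.ne_zero i₀ ((WithLp.ofLp_eq_zero 2).mp h)
  have hBu : B *ᵥ u = 0 := by
    rw [hBdef, Matrix.sub_mulVec, hu, smul_mulVec, Matrix.one_mulVec,
      RCLike.real_smul_eq_coe_smul (K := ℂ), ← htdef]
    exact sub_eq_zero.mpr rfl
  set v := S⁻¹ *ᵥ u with hvdef
  have hσv : (ρ₁ - (t:ℂ) • ρ₂) *ᵥ v = 0 := by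
    rw [hσSBS, hvdef, Matrix.mulVec_mulVec]
    have h1 : S * B * S * S⁻¹ = S * B := by
      simp only [Matrix.mul_assoc, hSS, mul_one]
    rw [h1, ← Matrix.mulVec_mulVec, hBu, Matrix.mulVec_zero]
  have hv0 : v ≠ 0 := by
    intro h
    apply hu0
    have hSv : S *ᵥ v = u := by
      rw [hvdef, Matrix.mulVec_mulVec, hSS, Matrix.one_mulVec]
    rw [h, Matrix.mulVec_zero] at hSv
    exact hSv.symm
  have htrσ : (ρ₁ - (t:ℂ) • ρ₂).trace = 0 := by
    by_contra htrne
    exact hv0 (invariant_ker_trivial L G hirr _ hσpsd hσinv htrne v hσv)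
  have ht1 : (t:ℂ) = 1 := by
    have htrσ' := htrσ
    rw [trace_sub, trace_smul, h₁tr, h₂tr, smul_eq_mul, mul_one] at htrσ'
    exact (sub_eq_zero.mp htrσ').symm
  have hσ0 : ρ₁ - (t:ℂ) • ρ₂ = 0 := psd_trace_zero hσpsd htrσ
  rw [ht1, one_smul] at hσ0
  exact sub_eq_zero.mp hσ0
end

section
/- If the QMS admits a positive definite matrix ρ of trace 1 with 𝓛_*(ρ) = 0, then every fixed point belongs to the decoherence free algebra: if x ∈ M_d(ℂ) satisfies T_t(x) = x for all t ≥ 0, then T_t(x*x) = x*x for all t ≥ 0. -/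
open Matrix
open scoped ComplexOrder

attribute [local instance] Matrix.normedAddCommGroup Matrix.normedSpace

/-- The GKSL generator `𝓛(x) = G* x + ∑ ℓ, (L ℓ)* x L ℓ + x G`
as a continuous linear endomorphism of `M_d(ℂ)`. -/
noncomputable def gkslGen {d m : ℕ} (G : Matrix (Fin d) (Fin d) ℂ)
    (L : Fin m → Matrix (Fin d) (Fin d) ℂ) :
    Matrix (Fin d) (Fin d) ℂ →L[ℂ] Matrix (Fin d) (Fin d) ℂ :=
  LinearMap.toContinuousLinearMap
    (LinearMap.mulLeft ℂ Gᴴ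
      + ∑ ℓ, (LinearMap.mulLeft ℂ (L ℓ)ᴴ).comp (LinearMap.mulRight ℂ (L ℓ))
      + LinearMap.mulRight ℂ G)

instance matrixCLM_isTopologicalRing {d : ℕ} :
    IsTopologicalRing (Matrix (Fin d) (Fin d) ℂ →L[ℂ] Matrix (Fin d) (Fin d) ℂ) :=
  @NonUnitalSeminormedRing.toIsTopologicalRing _
    (@ContinuousLinearMap.toSeminormedRing ℂ (Matrix (Fin d) (Fin d) ℂ) _ _
      Matrix.normedSpace).toNonUnitalSeminormedRing

lemma gkslGen_apply' {d m : ℕ} (G : Matrix (Fin d) (Fin d) ℂ)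
    (L : Fin m → Matrix (Fin d) (Fin d) ℂ) (y : Matrix (Fin d) (Fin d) ℂ) :
    gkslGen G L y = Gᴴ * y + (∑ ℓ, (L ℓ)ᴴ * (y * L ℓ)) + y * G := by
  simp [gkslGen, LinearMap.mulLeft_apply, LinearMap.mulRight_apply, LinearMap.sum_apply]

lemma exp_apply_eq_self_gen {E : Type*} [NormedAddCommGroup E] [NormedSpace ℂ E]
    [CompleteSpace E] (A : E →L[ℂ] E) (y : E) (h : A y = 0) :
    NormedSpace.exp A y = y := by
  rw [NormedSpace.exp_eq_tsum (𝕂 := ℂ)]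
  beta_reduce
  have hs : Summable fun n : ℕ => ((n.factorial : ℂ))⁻¹ • A ^ n :=
    NormedSpace.expSeries_summable' (𝕂 := ℂ) A
  have hmap := (ContinuousLinearMap.apply ℂ (E) y).map_tsum hs
  simp only [ContinuousLinearMap.apply_apply] at hmap
  rw [hmap, tsum_eq_single 0]
  · simp
  · intro n hn
    obtain ⟨k, rfl⟩ := Nat.exists_eq_succ_of_ne_zero hn
    rw [ContinuousLinearMap.smul_apply, pow_succ, ContinuousLinearMap.mul_apply, h, map_zero,
      smul_zero]

/-- If `A y = 0` then `exp A` fixes `y`. -/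
lemma exp_apply_eq_self' {d : ℕ} (A : Matrix (Fin d) (Fin d) ℂ →L[ℂ] Matrix (Fin d) (Fin d) ℂ)
    (y : Matrix (Fin d) (Fin d) ℂ) (h : A y = 0) :
    NormedSpace.exp A y = y := by
  exact exp_apply_eq_self_gen A y h

/-- A fixed point of the whole semigroup is in the kernel of the generator. -/
lemma gen_apply_eq_zero_of_fixed' {E : Type*} [NormedAddCommGroup E] [NormedSpace ℂ E]
    [CompleteSpace E] (A : E →L[ℂ] E) (x : E)
    (hx : ∀ t : ℝ, 0 ≤ t → (NormedSpace.exp ((t : ℂ) • A)) x = x) : A x = 0 := by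
  have h1 : HasDerivAt (fun z : ℂ => NormedSpace.exp (z • A))
      (NormedSpace.exp ((1:ℂ) • A) * A) (1:ℂ) := hasDerivAt_exp_smul_const A 1
  have h2 : HasDerivAt (fun z : ℂ => (NormedSpace.exp (z • A)) x)
      ((NormedSpace.exp ((1:ℂ) • A) * A) x) (1:ℂ) := by
    simpa using h1.clm_apply (hasDerivAt_const (1:ℂ) x)
  have h3 : HasDerivAt (fun t : ℝ => (NormedSpace.exp (((t:ℝ) : ℂ) • A)) x)
      ((NormedSpace.exp ((1:ℂ) • A) * A) x) (1:ℝ) := by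
    have := h2.scomp (1:ℝ) (Complex.ofRealCLM.hasDerivAt (x := (1:ℝ)))
    simpa [Function.comp_def] using this
  have heq : (fun t : ℝ => (NormedSpace.exp (((t:ℝ) : ℂ) • A)) x) =ᶠ[nhds (1:ℝ)]
      fun _ => x := by
    filter_upwards [isOpen_Ioi.mem_nhds (show (0:ℝ) < 1 by norm_num)] with t ht
    exact hx t ht.le
  have h4 : HasDerivAt (fun _ : ℝ => x) ((NormedSpace.exp ((1:ℂ) • A) * A) x) (1:ℝ) :=
    h3.congr_of_eventuallyEq heq.symm
  have h5 : (NormedSpace.exp ((1:ℂ) • A) * A) x = 0 :=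
    h4.unique (hasDerivAt_const 1 x)
  have hinv : NormedSpace.exp (-((1:ℂ) • A)) * NormedSpace.exp ((1:ℂ) • A) = 1 := by
    have h6 := NormedSpace.exp_add_of_commute_of_mem_ball (𝕂 := ℂ)
      (Commute.neg_left (Commute.refl ((1:ℂ) • A)))
      ((NormedSpace.expSeries_radius_eq_top ℂ (E →L[ℂ] E)).symm ▸ edist_lt_top _ _)
      ((NormedSpace.expSeries_radius_eq_top ℂ (E →L[ℂ] E)).symm ▸ edist_lt_top _ _)
    rw [neg_add_cancel, NormedSpace.exp_zero] at h6
    exact h6.symm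
  have h7 := congrArg (fun z => NormedSpace.exp (-((1:ℂ) • A)) z) h5
  simp only [ContinuousLinearMap.mul_apply] at h7
  rw [← ContinuousLinearMap.comp_apply, ← ContinuousLinearMap.mul_def, hinv] at h7
  simpa using h7

lemma trace_mul_conjTranspose_nonneg' {d : ℕ} (M : Matrix (Fin d) (Fin d) ℂ) :
    0 ≤ (M * Mᴴ).trace := by
  rw [Matrix.trace]
  refine Finset.sum_nonneg fun i _ => ?_
  rw [Matrix.diag_apply, Matrix.mul_apply]
  exact Finset.sum_nonneg fun j _ => by
    rw [Matrix.conjTranspose_apply]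
    exact mul_star_self_nonneg _

lemma eq_zero_of_trace_mul_conjTranspose_eq_zero' {d : ℕ} {M : Matrix (Fin d) (Fin d) ℂ}
    (h : (M * Mᴴ).trace = 0) : M = 0 := by
  rw [Matrix.trace] at h
  have h1 := (Finset.sum_eq_zero_iff_of_nonneg (fun i _ => by
    rw [Matrix.diag_apply, Matrix.mul_apply]
    exact Finset.sum_nonneg fun j _ => by
      rw [Matrix.conjTranspose_apply]; exact mul_star_self_nonneg _)).mp h
  ext i j
  have h2 := h1 i (Finset.mem_univ i)
  rw [Matrix.diag_apply, Matrix.mul_apply] at h2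
  have h3 := (Finset.sum_eq_zero_iff_of_nonneg (fun j _ => by
    rw [Matrix.conjTranspose_apply]; exact mul_star_self_nonneg _)).mp h2
  have h4 := h3 j (Finset.mem_univ j)
  rw [Matrix.conjTranspose_apply] at h4
  rcases mul_eq_zero.mp h4 with h | h
  · simpa using h
  · simpa using star_eq_zero.mp h

/-- if the QMS admits a faithful invariant state (a positive definite `ρ`
of trace `1` with `𝓛_*(ρ) = 0`), then every fixed point of the semigroup `T_t = exp(t 𝓛)`
belongs to the decoherence free algebra: `T_t(x) = x` for all `t ≥ 0` implies
`T_t(x*x) = x*x` for all `t ≥ 0`. -/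
theorem fixed_point_mem_decoherence_free {d m : ℕ} (hd : 1 ≤ d) (hm : 1 ≤ m)
    (H : Matrix (Fin d) (Fin d) ℂ) (hH : H.IsHermitian)
    (L : Fin m → Matrix (Fin d) (Fin d) ℂ) (G : Matrix (Fin d) (Fin d) ℂ)
    (hG : G = (-(1/2 : ℂ)) • ∑ ℓ, (L ℓ)ᴴ * L ℓ - Complex.I • H)
    (ρ : Matrix (Fin d) (Fin d) ℂ) (hρpos : ρ.PosDef) (hρtr : ρ.trace = 1)
    (hρinv : G * ρ + ∑ ℓ, L ℓ * ρ * (L ℓ)ᴴ + ρ * Gᴴ = 0)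
    (x : Matrix (Fin d) (Fin d) ℂ)
    (hx : ∀ t : ℝ, 0 ≤ t → (NormedSpace.exp ((t : ℂ) • gkslGen G L)) x = x) :
    ∀ t : ℝ, 0 ≤ t →
      (NormedSpace.exp ((t : ℂ) • gkslGen G L)) (xᴴ * x) = xᴴ * x := by
  -- the generator kills `x`
  have hLx : gkslGen G L x = 0 := gen_apply_eq_zero_of_fixed' _ x hx
  -- hence also `xᴴ`
  have hLxH : gkslGen G L xᴴ = 0 := by
    have hadj : gkslGen G L xᴴ = (gkslGen G L x)ᴴ := by
      rw [gkslGen_apply', gkslGen_apply']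
      simp only [conjTranspose_add, conjTranspose_mul, conjTranspose_sum,
        conjTranspose_conjTranspose, mul_assoc]
      abel
    rw [hadj, hLx, conjTranspose_zero]
  -- the dissipation identity
  have hAy : gkslGen G L (xᴴ * x)
      = ∑ ℓ, (x * L ℓ - L ℓ * x)ᴴ * (x * L ℓ - L ℓ * x) := by
    have hGsum : ∑ ℓ, (L ℓ)ᴴ * L ℓ = -G - Gᴴ := by
      have hS : (∑ ℓ, (L ℓ)ᴴ * L ℓ)ᴴ = ∑ ℓ, (L ℓ)ᴴ * L ℓ := by
        simp [conjTranspose_sum, conjTranspose_mul]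
      rw [hG]
      rw [conjTranspose_sub, conjTranspose_smul, conjTranspose_smul, hS, hH.eq]
      rw [show (star (-(1/2:ℂ))) = -(1/2:ℂ) by
          simp [star_neg, star_div₀, star_one],
        show (star Complex.I) = -Complex.I by simp [Complex.star_def, Complex.conj_I]]
      module
    have hLx' := hLx
    have hLxH' := hLxH
    rw [gkslGen_apply'] at hLx' hLxH'
    have e1 : ∑ ℓ, (L ℓ)ᴴ * (x * L ℓ) = -(Gᴴ * x) - x * G := by
      rw [← sub_eq_zero, ← hLx']; abel
    have e2 : ∑ ℓ, (L ℓ)ᴴ * (xᴴ * L ℓ) = -(Gᴴ * xᴴ) - xᴴ * G := by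
      rw [← sub_eq_zero, ← hLxH']; abel
    rw [gkslGen_apply']
    have expand : ∀ ℓ ∈ Finset.univ, (x * L ℓ - L ℓ * x)ᴴ * (x * L ℓ - L ℓ * x)
        = (L ℓ)ᴴ * ((xᴴ * x) * L ℓ) - ((L ℓ)ᴴ * (xᴴ * L ℓ)) * x
          - xᴴ * ((L ℓ)ᴴ * (x * L ℓ)) + (xᴴ * ((L ℓ)ᴴ * L ℓ)) * x := by
      intro ℓ _
      simp only [conjTranspose_sub, conjTranspose_mul]
      noncomm_ring
    rw [Finset.sum_congr rfl expand]
    simp only [Finset.sum_add_distrib, Finset.sum_sub_distrib, ← Finset.sum_mul,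
      ← Finset.mul_sum]
    rw [e1, e2, hGsum]
    noncomm_ring
  -- trace duality: `trace (ρ * 𝓛(y)) = 0` for all `y`
  have hdual : ∀ y : Matrix (Fin d) (Fin d) ℂ, (ρ * gkslGen G L y).trace = 0 := by
    intro y
    have htr0 : ((G * ρ) * y).trace + (∑ ℓ, ((L ℓ * ρ * (L ℓ)ᴴ) * y).trace)
        + ((ρ * Gᴴ) * y).trace = 0 := by
      have h := congrArg (fun z => (z * y).trace) hρinv
      simpa [add_mul, trace_add, Finset.sum_mul, trace_sum] using h
    have hA : (ρ * (Gᴴ * y)).trace = ((ρ * Gᴴ) * y).trace := by rw [mul_assoc]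
    have hB : (ρ * (y * G)).trace = ((G * ρ) * y).trace := by
      rw [← mul_assoc, Matrix.trace_mul_cycle]
    have hC : ∀ ℓ : Fin m, (ρ * ((L ℓ)ᴴ * (y * L ℓ))).trace
        = ((L ℓ * ρ * (L ℓ)ᴴ) * y).trace := by
      intro ℓ
      rw [show ρ * ((L ℓ)ᴴ * (y * L ℓ)) = (ρ * (L ℓ)ᴴ * y) * L ℓ from by noncomm_ring,
        Matrix.trace_mul_comm,
        show L ℓ * (ρ * (L ℓ)ᴴ * y) = (L ℓ * ρ * (L ℓ)ᴴ) * y from by noncomm_ring]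
    rw [gkslGen_apply', mul_add, mul_add, trace_add, trace_add, Finset.mul_sum, trace_sum,
      hA, hB, Finset.sum_congr rfl fun ℓ _ => hC ℓ]
    linear_combination htr0
  -- the square root of `ρ`
  obtain ⟨σ, hσsa, -, hσmul⟩ : ∃ σ : Matrix (Fin d) (Fin d) ℂ, IsSelfAdjoint σ ∧
      QuasispectrumRestricts σ ContinuousMap.realToNNReal ∧ σ * σ = ρ := by
    open scoped MatrixOrder in
    exact CFC.exists_sqrt_of_isSelfAdjoint_of_quasispectrumRestricts hρpos.posSemidef.isHermitian
      (QuasispectrumRestricts.nnreal_of_nonneg hρpos.posSemidef.nonneg)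
  have hσH : σᴴ = σ := hσsa.star_eq
  have hσdet : σ.det ≠ 0 := by
    intro h0
    have : ρ.det = 0 := by rw [← hσmul, det_mul, h0, mul_zero]
    exact (ne_of_gt hρpos.det_pos) this
  -- each term of the nonnegative sum has zero trace
  have hsum : ∑ ℓ, (((x * L ℓ - L ℓ * x) * σ) * ((x * L ℓ - L ℓ * x) * σ)ᴴ).trace = 0 := by
    have h := hdual (xᴴ * x)
    rw [hAy, Finset.mul_sum, trace_sum] at h
    rw [← h]
    refine Finset.sum_congr rfl fun ℓ _ => ?_
    rw [conjTranspose_mul, hσH,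
      show ((x * L ℓ - L ℓ * x) * σ) * (σ * (x * L ℓ - L ℓ * x)ᴴ)
        = ((x * L ℓ - L ℓ * x) * (σ * σ)) * (x * L ℓ - L ℓ * x)ᴴ from by noncomm_ring,
      hσmul, Matrix.trace_mul_comm,
      show (x * L ℓ - L ℓ * x)ᴴ * ((x * L ℓ - L ℓ * x) * ρ)
        = ((x * L ℓ - L ℓ * x)ᴴ * (x * L ℓ - L ℓ * x)) * ρ from by noncomm_ring,
      Matrix.trace_mul_comm]
  -- each commutator vanishes
  have hC0 : ∀ ℓ : Fin m, x * L ℓ - L ℓ * x = 0 := by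
    intro ℓ
    have hterm : ∀ ℓ' ∈ Finset.univ,
        (0:ℂ) ≤ (((x * L ℓ' - L ℓ' * x) * σ) * ((x * L ℓ' - L ℓ' * x) * σ)ᴴ).trace :=
      fun ℓ' _ => trace_mul_conjTranspose_nonneg' _
    have h0 := (Finset.sum_eq_zero_iff_of_nonneg hterm).mp hsum ℓ (Finset.mem_univ ℓ)
    have hCσ : (x * L ℓ - L ℓ * x) * σ = 0 :=
      eq_zero_of_trace_mul_conjTranspose_eq_zero' h0
    have := congrArg (fun z => z * σ⁻¹) hCσ
    simpa [mul_assoc, Matrix.mul_nonsing_inv σ (isUnit_iff_ne_zero.mpr hσdet)] using this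
  -- the generator kills `xᴴ * x`
  have hfinal : gkslGen G L (xᴴ * x) = 0 := by
    rw [hAy]
    exact Finset.sum_eq_zero fun ℓ _ => by rw [hC0 ℓ]; simp
  intro t _
  exact exp_apply_eq_self' _ _ (by rw [ContinuousLinearMap.smul_apply, hfinal, smul_zero])
end

section
/- If the Lie algebra rank condition holds (i.e., for every nonzero ξ ∈ ℂ^d the set {A ξ : A in the Lie subalgebra of M_d(ℂ) generated by G̃, L_1, …, L_m} spans ℂ^d, where G̃ = G − (1/2)∑_{ℓ=1}^m L_ℓ²), then the QMS is irreducible. -/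
open Matrix

attribute [local instance 100] LieRing.ofAssociativeRing

/-- the Lie algebra rank condition implies irreducibility of the QMS:
if for every nonzero `ξ` the vectors `A ξ`, with `A` ranging over the Lie subalgebra
of `M_d(ℂ)` generated by `G̃ = G - (1/2)∑ ℓ, (L ℓ)²` and `L 1, …, L m`, span `ℂ^d`,
then the only subspaces of `ℂ^d` invariant under `G` and every `L ℓ` are `{0}`
and `ℂ^d`. -/
theorem larc_implies_irreducible {d m : ℕ} (hd : 1 ≤ d) (hm : 1 ≤ m)
    (H : Matrix (Fin d) (Fin d) ℂ) (hH : H.IsHermitian)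
    (L : Fin m → Matrix (Fin d) (Fin d) ℂ) (G : Matrix (Fin d) (Fin d) ℂ)
    (hG : G = (-(1/2 : ℂ)) • ∑ ℓ, (L ℓ)ᴴ * L ℓ - Complex.I • H)
    (Gt : Matrix (Fin d) (Fin d) ℂ)
    (hGt : Gt = G - (1/2 : ℂ) • ∑ ℓ, L ℓ ^ 2)
    (hlarc : ∀ ξ : Fin d → ℂ, ξ ≠ 0 →
      Submodule.span ℂ
        {v | ∃ A ∈ LieSubalgebra.lieSpan ℂ (Matrix (Fin d) (Fin d) ℂ)
          ({Gt} ∪ Set.range L), v = A *ᵥ ξ} = ⊤) :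
    ∀ V : Submodule ℂ (Fin d → ℂ),
      (∀ v ∈ V, G *ᵥ v ∈ V) → (∀ ℓ, ∀ v ∈ V, L ℓ *ᵥ v ∈ V) → V = ⊥ ∨ V = ⊤ := by
  intro V hGV hLV
  by_cases hV : V = ⊥
  · exact Or.inl hV
  right
  obtain ⟨ξ, hξV, hξ0⟩ := (Submodule.ne_bot_iff V).mp hV
  -- The Lie subalgebra of matrices preserving V
  let S : LieSubalgebra ℂ (Matrix (Fin d) (Fin d) ℂ) :=
  { carrier := {A | ∀ v ∈ V, A *ᵥ v ∈ V}
    add_mem' := by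
      intro a b ha hb v hv
      rw [Matrix.add_mulVec]
      exact V.add_mem (ha v hv) (hb v hv)
    zero_mem' := by
      intro v hv
      rw [Matrix.zero_mulVec]
      exact V.zero_mem
    smul_mem' := by
      intro c a ha v hv
      rw [Matrix.smul_mulVec]
      exact V.smul_mem c (ha v hv)
    lie_mem' := by
      intro a b ha hb v hv
      rw [Ring.lie_def, Matrix.sub_mulVec, ← Matrix.mulVec_mulVec, ← Matrix.mulVec_mulVec]
      exact V.sub_mem (ha _ (hb v hv)) (hb _ (ha v hv)) }
  have hsub : ({Gt} ∪ Set.range L : Set (Matrix (Fin d) (Fin d) ℂ)) ⊆ S := by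
    rintro A (rfl | ⟨ℓ, rfl⟩)
    · intro v hv
      have hsum : (∑ ℓ, L ℓ ^ 2) *ᵥ v = ∑ ℓ, (L ℓ ^ 2) *ᵥ v := by
        ext i
        simp [Matrix.mulVec, dotProduct, Matrix.sum_apply, Finset.sum_mul]
        rw [Finset.sum_comm]
      rw [hGt, Matrix.sub_mulVec, Matrix.smul_mulVec, hsum]
      refine V.sub_mem (hGV v hv) (V.smul_mem _ (Submodule.sum_mem V fun ℓ _ => ?_))
      rw [pow_two, ← Matrix.mulVec_mulVec]
      exact hLV ℓ _ (hLV ℓ v hv)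
    · exact fun v hv => hLV ℓ v hv
  have hle : LieSubalgebra.lieSpan ℂ (Matrix (Fin d) (Fin d) ℂ) ({Gt} ∪ Set.range L) ≤ S :=
    LieSubalgebra.lieSpan_le.mpr hsub
  have hspan : Submodule.span ℂ
      {v | ∃ A ∈ LieSubalgebra.lieSpan ℂ (Matrix (Fin d) (Fin d) ℂ)
        ({Gt} ∪ Set.range L), v = A *ᵥ ξ} ≤ V := by
    rw [Submodule.span_le]
    rintro v ⟨A, hA, rfl⟩
    exact hle hA ξ hξV
  rw [hlarc ξ hξ0] at hspan
  exact top_le_iff.mp hspan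
end

section
/- A generic QMS is irreducible if and only if the Lie algebra rank condition holds, i.e., the only subspaces of ℂ^d invariant under G and under every L_{ℓk} are {0} and ℂ^d if and only if for every nonzero ξ ∈ ℂ^d the set {A ξ : A in the Lie subalgebra of M_d(ℂ) generated by G̃ and the matrices L_{ℓk}, ℓ ≠ k} spans ℂ^d, where G̃ = G − (1/2)∑_{ℓ≠k} L_{ℓk}². -/
open Matrix

attribute [local instance 100] LieRing.ofAssociativeRing

/-- Jump operators of a generic QMS: `L_{ℓk} = γ_{ℓk}^{1/2} |e_k⟩⟨e_ℓ|`. -/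
noncomputable def genL {d : ℕ} (γ : Fin d → Fin d → ℝ) (ℓ k : Fin d) :
    Matrix (Fin d) (Fin d) ℂ :=
  (Real.sqrt (γ ℓ k) : ℂ) • Matrix.single k ℓ 1

/-- `G = -(1/2)∑_{ℓ≠k} γ_{ℓk} |e_ℓ⟩⟨e_ℓ| - iH` for a generic QMS with real diagonal
Hamiltonian `H = diag(h)`. -/
noncomputable def genG {d : ℕ} (γ : Fin d → Fin d → ℝ) (h : Fin d → ℝ) :
    Matrix (Fin d) (Fin d) ℂ :=
  (-(1/2 : ℂ)) • (∑ ℓ, ∑ k, if ℓ ≠ k then (γ ℓ k : ℂ) • Matrix.single ℓ ℓ 1 else 0)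
    - Complex.I • Matrix.diagonal (fun j => (h j : ℂ))

lemma stdBasis_mulVec {d : ℕ} (i j : Fin d) (c : ℂ) (v : Fin d → ℂ) :
    Matrix.single i j c *ᵥ v = Pi.single i (c * v j) := by
  ext k
  simp only [Matrix.mulVec, dotProduct, Matrix.single, Matrix.of_apply,
    Pi.single_apply, ite_and]
  rw [Finset.sum_eq_single j]
  · by_cases h : i = k <;> by_cases h' : k = i <;> simp_all [ite_mul]
  · intro b _ hb; simp [hb.symm, ite_mul]
  · simp

lemma genG_diag {d : ℕ} (γ : Fin d → Fin d → ℝ) (h : Fin d → ℝ) :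
    genG γ h = Matrix.diagonal (fun j =>
      (-(1/2 : ℂ)) * (∑ k, if j ≠ k then (γ j k : ℂ) else 0) - Complex.I * (h j : ℂ)) := by
  have key : (∑ ℓ, ∑ k, if ℓ ≠ k then (γ ℓ k : ℂ) • Matrix.single ℓ ℓ 1 else 0)
      = Matrix.diagonal (fun ℓ => ∑ k, if ℓ ≠ k then (γ ℓ k : ℂ) else 0) := by
    ext i j
    simp only [Matrix.sum_apply, apply_ite (fun M : Matrix (Fin d) (Fin d) ℂ => M i j),
      Matrix.smul_apply, Matrix.zero_apply, Matrix.single, Matrix.of_apply,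
      smul_eq_mul]
    by_cases hij : i = j
    · subst hij
      rw [Matrix.diagonal_apply_eq, Finset.sum_eq_single i]
      · apply Finset.sum_congr rfl
        intro k _
        simp
      · intro b _ hb
        apply Finset.sum_eq_zero
        intro k _
        simp [hb]
      · simp
    · rw [Matrix.diagonal_apply_ne _ hij]
      apply Finset.sum_eq_zero
      intro b _
      apply Finset.sum_eq_zero
      intro k _
      have hb : ¬(b = i ∧ b = j) := fun hc => hij (hc.1.symm.trans hc.2)
      simp [hb]
  rw [genG, key]
  ext i j
  by_cases hij : i = j
  · subst hij
    simp [Matrix.diagonal_apply_eq, Matrix.sub_apply, Matrix.smul_apply]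
  · simp [Matrix.diagonal_apply_ne _ hij]

def invLie {d : ℕ} (V : Submodule ℂ (Fin d → ℂ)) :
    LieSubalgebra ℂ (Matrix (Fin d) (Fin d) ℂ) where
  carrier := {A | ∀ v ∈ V, A *ᵥ v ∈ V}
  zero_mem' := by intro v hv; rw [Matrix.zero_mulVec]; exact V.zero_mem
  add_mem' := by
    intro A B hA hB v hv
    rw [Matrix.add_mulVec]; exact V.add_mem (hA v hv) (hB v hv)
  smul_mem' := by
    intro c A hA v hv
    rw [Matrix.smul_mulVec]; exact V.smul_mem c (hA v hv)
  lie_mem' := by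
    intro A B hA hB v hv
    rw [Ring.lie_def, Matrix.sub_mulVec, ← Matrix.mulVec_mulVec, ← Matrix.mulVec_mulVec]
    exact V.sub_mem (hA _ (hB v hv)) (hB _ (hA v hv))

lemma mem_invLie {d : ℕ} {V : Submodule ℂ (Fin d → ℂ)} {A : Matrix (Fin d) (Fin d) ℂ} :
    A ∈ invLie V ↔ ∀ v ∈ V, A *ᵥ v ∈ V := Iff.rfl

/-- a generic QMS is irreducible if and only if the Lie algebra rank
condition holds: the only subspaces of `ℂ^d` invariant under `G` and every `L_{ℓk}`
are `{0}` and `ℂ^d` iff for every nonzero `ξ` the set `{A ξ}` with `A` in the Lie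
subalgebra generated by `G̃ = G - (1/2)∑_{ℓ≠k} L_{ℓk}²` and the `L_{ℓk}` spans `ℂ^d`. -/
theorem generic_irreducible_iff_larc {d : ℕ} (hd : 2 ≤ d)
    (γ : Fin d → Fin d → ℝ) (hγ : ∀ ℓ k : Fin d, ℓ ≠ k → 0 ≤ γ ℓ k)
    (h : Fin d → ℝ)
    (Gt : Matrix (Fin d) (Fin d) ℂ)
    (hGt : Gt = genG γ h
      - (1/2 : ℂ) • ∑ ℓ, ∑ k, if ℓ ≠ k then (genL γ ℓ k) ^ 2 else 0) :
    (∀ V : Submodule ℂ (Fin d → ℂ),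
        (∀ v ∈ V, genG γ h *ᵥ v ∈ V) →
        (∀ ℓ k : Fin d, ℓ ≠ k → ∀ v ∈ V, genL γ ℓ k *ᵥ v ∈ V) → V = ⊥ ∨ V = ⊤)
      ↔ (∀ ξ : Fin d → ℂ, ξ ≠ 0 →
          Submodule.span ℂ
            {v | ∃ A ∈ LieSubalgebra.lieSpan ℂ (Matrix (Fin d) (Fin d) ℂ)
              {A | A = Gt ∨ ∃ ℓ k : Fin d, ℓ ≠ k ∧ A = genL γ ℓ k},
              v = A *ᵥ ξ} = ⊤) := by
  classical
  set S : Set (Matrix (Fin d) (Fin d) ℂ) :=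
    {A | A = Gt ∨ ∃ ℓ k : Fin d, ℓ ≠ k ∧ A = genL γ ℓ k} with hS
  set L := LieSubalgebra.lieSpan ℂ (Matrix (Fin d) (Fin d) ℂ) S with hLdef
  have hGt0 : Gt = genG γ h := by
    rw [hGt]
    have hz : (∑ ℓ, ∑ k, if ℓ ≠ k then (genL γ ℓ k) ^ 2 else 0
        : Matrix (Fin d) (Fin d) ℂ) = 0 := by
      apply Finset.sum_eq_zero; intro ℓ _
      apply Finset.sum_eq_zero; intro k _
      split_ifs with hlk
      · rw [genL, sq, smul_mul_smul_comm, Matrix.single_mul_single_of_ne (h := hlk), smul_zero]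
      · rfl
    rw [hz, smul_zero, sub_zero]
  constructor
  · -- irreducible ⇒ LARC
    intro hirr
    have hconn : ∀ a b : Fin d,
        Relation.ReflTransGen (fun x y => x ≠ y ∧ 0 < γ x y) a b := by
      intro a b
      set C : Set (Fin d) :=
        {j | Relation.ReflTransGen (fun x y => x ≠ y ∧ 0 < γ x y) a j} with hC
      let V : Submodule ℂ (Fin d → ℂ) :=
        { carrier := {v | ∀ j, j ∉ C → v j = 0}
          add_mem' := fun {p q} hp hq j hj => by
            simp only [Pi.add_apply, hp j hj, hq j hj, add_zero]
          zero_mem' := fun j hj => rfl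
          smul_mem' := fun c v hv j hj => by
            simp only [Pi.smul_apply, hv j hj, smul_zero] }
      have hVmem : ∀ v : Fin d → ℂ, v ∈ V ↔ ∀ j, j ∉ C → v j = 0 := fun _ => Iff.rfl
      have hVG : ∀ v ∈ V, genG γ h *ᵥ v ∈ V := by
        intro v hv
        rw [hVmem]
        intro j hj
        rw [genG_diag, Matrix.mulVec_diagonal, (hVmem v).mp hv j hj, mul_zero]
      have hVL : ∀ x y : Fin d, x ≠ y → ∀ v ∈ V, genL γ x y *ᵥ v ∈ V := by
        intro x y hxy v hv
        rw [hVmem]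
        intro j hj
        rw [genL, Matrix.smul_mulVec, stdBasis_mulVec, one_mul]
        simp only [Pi.smul_apply, smul_eq_mul]
        rcases eq_or_ne j y with rfl | hjy
        · rw [Pi.single_eq_same]
          by_cases hpos : 0 < γ x j
          · have hxC : x ∉ C := fun hmem => hj (hmem.tail ⟨hxy, hpos⟩)
            rw [(hVmem v).mp hv x hxC, mul_zero]
          · rw [show Real.sqrt (γ x j) = 0 from
              Real.sqrt_eq_zero'.mpr (le_of_not_gt hpos)]
            simp
        · rw [Pi.single_eq_of_ne hjy, mul_zero]
      rcases hirr V hVG hVL with hbot | htop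
      · exfalso
        have hmem : Pi.single a (1 : ℂ) ∈ V := by
          rw [hVmem]
          intro j hj
          rcases eq_or_ne j a with rfl | hja
          · exact absurd Relation.ReflTransGen.refl hj
          · exact Pi.single_eq_of_ne hja 1
        rw [hbot, Submodule.mem_bot] at hmem
        have := congrFun hmem a
        rw [Pi.single_eq_same] at this
        exact one_ne_zero this
      · by_contra hb
        have hmem : Pi.single b (1 : ℂ) ∈ V := by
          rw [htop]; trivial
        have := (hVmem _).mp hmem b hb
        rw [Pi.single_eq_same] at this
        exact one_ne_zero this
    have hEmem : ∀ x y : Fin d, x ≠ y →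
        (Matrix.single y x 1 : Matrix (Fin d) (Fin d) ℂ) ∈ L := by
      have base : ∀ x y : Fin d, x ≠ y → 0 < γ x y →
          (Matrix.single y x 1 : Matrix (Fin d) (Fin d) ℂ) ∈ L := by
        intro x y hxy hpos
        have hmem : genL γ x y ∈ L :=
          LieSubalgebra.subset_lieSpan (Or.inr ⟨x, y, hxy, rfl⟩)
        have h2 := L.smul_mem (((Real.sqrt (γ x y) : ℝ) : ℂ))⁻¹ hmem
        rw [genL, smul_smul, inv_mul_cancel₀
          (by exact_mod_cast Real.sqrt_ne_zero'.mpr hpos), one_smul] at h2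
        exact h2
      intro x y hxy
      have htg : Relation.TransGen (fun p q => p ≠ q ∧ 0 < γ p q) x y := by
        rcases Relation.reflTransGen_iff_eq_or_transGen.mp (hconn x y) with he | ht
        · exact absurd he.symm hxy
        · exact ht
      revert hxy
      induction htg with
      | single h1 => exact fun _ => base _ _ h1.1 h1.2
      | @tail p q h1 h2 ih =>
        intro hxq
        rcases eq_or_ne x p with rfl | hxp
        · exact base _ _ h2.1 h2.2
        · have hE1 := ih hxp
          have hE2 := base _ _ h2.1 h2.2
          have h3 := L.lie_mem hE2 hE1
          rw [Ring.lie_def, Matrix.single_mul_single_same, one_mul,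
            Matrix.single_mul_single_of_ne (h := hxq), sub_zero] at h3
          exact h3
    intro ξ hξ0
    obtain ⟨l0, hl0⟩ : ∃ a, ξ a ≠ 0 := by
      by_contra hc; push_neg at hc; exact hξ0 (funext hc)
    have hspan : ∀ A ∈ L, A *ᵥ ξ ∈ Submodule.span ℂ {v | ∃ A ∈ L, v = A *ᵥ ξ} :=
      fun A hA => Submodule.subset_span ⟨A, hA, rfl⟩
    have hsingle : ∀ j : Fin d,
        Pi.single j (1 : ℂ) ∈ Submodule.span ℂ {v | ∃ A ∈ L, v = A *ᵥ ξ} := by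
      have hoff : ∀ j, j ≠ l0 →
          Pi.single j (1 : ℂ) ∈ Submodule.span ℂ {v | ∃ A ∈ L, v = A *ᵥ ξ} := by
        intro j hj
        have h1 := L.smul_mem (ξ l0)⁻¹ (hEmem l0 j (fun he => hj he.symm))
        have h2 := hspan _ h1
        rw [Matrix.smul_mulVec, stdBasis_mulVec, one_mul] at h2
        have h3 : ((ξ l0)⁻¹ • (Pi.single j (ξ l0) : Fin d → ℂ)) = Pi.single j 1 := by
          ext m
          rcases eq_or_ne m j with rfl | hm
          · simp [inv_mul_cancel₀ hl0]
          · simp [Pi.single_eq_of_ne hm]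
        rwa [h3] at h2
      intro j
      rcases eq_or_ne j l0 with rfl | hj
      · haveI : Nontrivial (Fin d) := Fin.nontrivial_iff_two_le.mpr hd
        obtain ⟨m, hm⟩ := exists_ne j
        have hE1 := hEmem j m (fun he => hm he.symm)
        have hE2 := hEmem m j hm
        have hD := L.lie_mem hE2 hE1
        have hDξ := hspan _ hD
        rw [Ring.lie_def, Matrix.sub_mulVec, Matrix.single_mul_single_same,
          Matrix.single_mul_single_same, one_mul, stdBasis_mulVec, stdBasis_mulVec,
          one_mul, one_mul] at hDξ
        have hm1 : Pi.single m (ξ m) ∈ Submodule.span ℂ {v | ∃ A ∈ L, v = A *ᵥ ξ} := by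
          have h4 := (Submodule.span ℂ {v | ∃ A ∈ L, v = A *ᵥ ξ}).smul_mem (ξ m) (hoff m hm)
          rwa [show (ξ m • (Pi.single m (1 : ℂ) : Fin d → ℂ)) = Pi.single m (ξ m) by
            ext x
            rcases eq_or_ne x m with rfl | hx
            · simp
            · simp [Pi.single_eq_of_ne hx]] at h4
        have hj1 : Pi.single j (ξ j) ∈ Submodule.span ℂ {v | ∃ A ∈ L, v = A *ᵥ ξ} := by
          have h5 := (Submodule.span ℂ {v | ∃ A ∈ L, v = A *ᵥ ξ}).add_mem hDξ hm1
          rwa [sub_add_cancel] at h5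
        have h6 := (Submodule.span ℂ {v | ∃ A ∈ L, v = A *ᵥ ξ}).smul_mem (ξ j)⁻¹ hj1
        rwa [show ((ξ j)⁻¹ • (Pi.single j (ξ j) : Fin d → ℂ)) = Pi.single j 1 by
          ext x
          rcases eq_or_ne x j with rfl | hx
          · simp [inv_mul_cancel₀ hl0]
          · simp [Pi.single_eq_of_ne hx]] at h6
      · exact hoff j hj
    rw [eq_top_iff]
    intro v _
    rw [← Finset.univ_sum_single v]
    apply Submodule.sum_mem
    intro i _
    rw [show (Pi.single i (v i) : Fin d → ℂ) = v i • (Pi.single i 1 : Fin d → ℂ) by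
      ext x
      rcases eq_or_ne x i with rfl | hx
      · simp
      · simp [Pi.single_eq_of_ne hx]]
    exact Submodule.smul_mem _ _ (hsingle i)
  · -- LARC ⇒ irreducible
    intro hlarc V hG' hL'
    rcases eq_or_ne V ⊥ with hb | hb
    · exact Or.inl hb
    right
    obtain ⟨ξ, hξV, hξ0⟩ := Submodule.exists_mem_ne_zero_of_ne_bot hb
    have hsub : L ≤ invLie V := by
      rw [hLdef, LieSubalgebra.lieSpan_le]
      rintro A (rfl | ⟨x, y, hxy, rfl⟩)
      · intro v hv; rw [hGt0]; exact hG' v hv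
      · intro v hv; exact hL' x y hxy v hv
    rw [eq_top_iff, ← hlarc ξ hξ0, Submodule.span_le]
    rintro v ⟨A, hA, rfl⟩
    exact hsub hA ξ hξV
end

section
/- A generic QMS is irreducible if and only if the associated classical Markov chain is irreducible; that is, the only subspaces of ℂ^d invariant under G and under every L_{ℓk} are {0} and ℂ^d if and only if for every pair of states ℓ ≠ k there exist n ≥ 0 and states j₁,…,j_n with γ_{ℓ j₁} γ_{j₁ j₂} ··· γ_{j_n k} > 0 (for n = 0 this means γ_{ℓk} > 0). -/
open Matrix

/-- The product `γ_{ℓ j₁} γ_{j₁ j₂} ⋯ γ_{jₙ k}` of rates along the path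
`ℓ → j₁ → ⋯ → jₙ → k`; for the empty path it is `γ_{ℓk}`. -/
noncomputable def pathProd {d : ℕ} (γ : Fin d → Fin d → ℝ) :
    Fin d → List (Fin d) → Fin d → ℝ
  | a, [], b => γ a b
  | a, j :: rest, b => γ a j * pathProd γ j rest b

lemma genL_mulVec {d : ℕ} (γ : Fin d → Fin d → ℝ) (a b : Fin d) (v : Fin d → ℂ) :
    genL γ a b *ᵥ v = ((Real.sqrt (γ a b) : ℂ) * v a) • (Pi.single b 1 : Fin d → ℂ) := by
  funext i
  simp [genL, Matrix.smul_mulVec, Matrix.mulVec, dotProduct,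
    Matrix.single, Pi.single_apply, ite_and, mul_comm, eq_comm]

lemma genG_apply_ne {d : ℕ} (γ : Fin d → Fin d → ℝ) (h : Fin d → ℝ) {i j : Fin d}
    (hij : i ≠ j) : genG γ h i j = 0 := by
  simp [genG, Matrix.diagonal_apply_ne _ hij, Matrix.sum_apply, Matrix.single,
    ite_and, apply_ite (fun M : Matrix (Fin d) (Fin d) ℂ => M i j)]
  refine Finset.sum_eq_zero fun x _ => Finset.sum_eq_zero fun y _ => ?_
  split_ifs with h1 h2 h3 <;> simp_all

lemma genG_mulVec_apply {d : ℕ} (γ : Fin d → Fin d → ℝ) (h : Fin d → ℝ)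
    (v : Fin d → ℂ) (j : Fin d) : (genG γ h *ᵥ v) j = genG γ h j j * v j := by
  rw [Matrix.mulVec, dotProduct]
  rw [Finset.sum_eq_single j]
  · intro m _ hm; rw [genG_apply_ne γ h (Ne.symm hm), zero_mul]
  · intro hj; exact absurd (Finset.mem_univ j) hj

lemma pathProd_append {d : ℕ} (γ : Fin d → Fin d → ℝ) (l : List (Fin d))
    (a m b : Fin d) : pathProd γ a (l ++ [m]) b = pathProd γ a l m * γ m b := by
  induction l generalizing a with
  | nil => simp [pathProd]
  | cons j rest ih => simp [pathProd, ih, mul_assoc]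


/-- a generic QMS is irreducible iff the associated classical Markov
chain is irreducible: the only subspaces of `ℂ^d` invariant under `G` and every
`L_{ℓk}` are `{0}` and `ℂ^d` iff for all `ℓ ≠ k` there is a path `ℓ → j₁ → ⋯ → jₙ → k`
with `γ_{ℓ j₁} γ_{j₁ j₂} ⋯ γ_{jₙ k} > 0`. -/
theorem generic_irreducible_iff_chain_irreducible {d : ℕ} (hd : 2 ≤ d)
    (γ : Fin d → Fin d → ℝ) (hγ : ∀ ℓ k : Fin d, ℓ ≠ k → 0 ≤ γ ℓ k)
    (h : Fin d → ℝ) :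
    (∀ V : Submodule ℂ (Fin d → ℂ),
        (∀ v ∈ V, genG γ h *ᵥ v ∈ V) →
        (∀ ℓ k : Fin d, ℓ ≠ k → ∀ v ∈ V, genL γ ℓ k *ᵥ v ∈ V) → V = ⊥ ∨ V = ⊤)
      ↔ (∀ ℓ k : Fin d, ℓ ≠ k → ∃ l : List (Fin d), 0 < pathProd γ ℓ l k) := by
  constructor
  · intro hirr ℓ k hlk
    by_contra hno
    push_neg at hno
    set step : Fin d → Fin d → Prop := fun a b => a ≠ b ∧ 0 < γ a b with hstep
    set S : Set (Fin d) := {b | Relation.ReflTransGen step ℓ b} with hS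
    have hSpath : ∀ b, b ∈ S → b = ℓ ∨ ∃ l, 0 < pathProd γ ℓ l b := by
      intro b hb
      induction hb with
      | refl => exact Or.inl rfl
      | @tail c b' hxc hcb ih =>
        rcases ih with rfl | ⟨l, hl⟩
        · exact Or.inr ⟨[], hcb.2⟩
        · exact Or.inr ⟨l ++ [c], by rw [pathProd_append]; exact mul_pos hl hcb.2⟩
    let V : Submodule ℂ (Fin d → ℂ) :=
      { carrier := {v | ∀ j ∉ S, v j = 0}
        add_mem' := fun {x y} hx hy j hj => by
          simp only [Pi.add_apply, hx j hj, hy j hj, add_zero]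
        zero_mem' := fun j _ => rfl
        smul_mem' := fun c v hv j hj => by
          simp only [Pi.smul_apply, hv j hj, smul_zero] }
    have memV : ∀ v : Fin d → ℂ, v ∈ V ↔ ∀ j ∉ S, v j = 0 := fun v => Iff.rfl
    have hG : ∀ v ∈ V, genG γ h *ᵥ v ∈ V := by
      intro v hv j hj
      rw [genG_mulVec_apply, (memV v).1 hv j hj, mul_zero]
    have hL : ∀ a b : Fin d, a ≠ b → ∀ v ∈ V, genL γ a b *ᵥ v ∈ V := by
      intro a b hab v hv j hj
      rw [genL_mulVec]
      by_cases hs : Real.sqrt (γ a b) = 0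
      · simp [hs]
      by_cases hva : v a = 0
      · simp [hva]
      have haS : a ∈ S := by
        by_contra hna; exact hva ((memV v).1 hv a hna)
      have hg : 0 < γ a b := by
        rcases lt_or_eq_of_le (hγ a b hab) with h' | h'
        · exact h'
        · exact absurd (by rw [← h', Real.sqrt_zero]) hs
      have hbS : b ∈ S := haS.tail ⟨hab, hg⟩
      have hjb : j ≠ b := fun e => hj (e ▸ hbS)
      simp [Pi.single_apply, hjb]
    rcases hirr V hG hL with hbot | htop
    · have hmem : (Pi.single ℓ 1 : Fin d → ℂ) ∈ V := by
        intro j hj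
        have hjl : j ≠ ℓ := fun e => hj (e ▸ Relation.ReflTransGen.refl)
        simp [Pi.single_apply, hjl]
      rw [hbot, Submodule.mem_bot] at hmem
      have := congrFun hmem ℓ
      simp at this
    · have hkS : k ∉ S := by
        intro hk
        rcases hSpath k hk with rfl | ⟨l, hl⟩
        · exact hlk rfl
        · exact absurd hl (not_lt.2 (hno l))
      have hmem : (Pi.single k 1 : Fin d → ℂ) ∈ V := htop ▸ Submodule.mem_top
      have := (memV _).1 hmem k hkS
      simp at this
  · intro hchain V hG hL
    by_cases hbot : V = ⊥
    · exact Or.inl hbot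
    right
    obtain ⟨v, hvV, hv0⟩ := (Submodule.ne_bot_iff V).1 hbot
    obtain ⟨a, hva⟩ : ∃ a, v a ≠ 0 := by
      by_contra hc
      push_neg at hc
      exact hv0 (funext hc)
    have single_mem : ∀ (x y : Fin d), x ≠ y → 0 < γ x y → ∀ w ∈ V, w x ≠ 0 →
        (Pi.single y 1 : Fin d → ℂ) ∈ V := by
      intro x y hxy hg w hw hwx
      have hmem := hL x y hxy w hw
      rw [genL_mulVec] at hmem
      have hc : (Real.sqrt (γ x y) : ℂ) * w x ≠ 0 :=
        mul_ne_zero (by exact_mod_cast (Real.sqrt_pos.2 hg).ne') hwx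
      have := V.smul_mem (((Real.sqrt (γ x y) : ℂ) * w x)⁻¹) hmem
      rwa [smul_smul, inv_mul_cancel₀ hc, one_smul] at this
    have key : ∀ (l : List (Fin d)) (x y : Fin d) (w : Fin d → ℂ), w ∈ V → w x ≠ 0 →
        pathProd γ x l y ≠ 0 → y = x ∨ (Pi.single y 1 : Fin d → ℂ) ∈ V := by
      intro l
      induction l with
      | nil =>
        intro x y w hw hwx hp
        by_cases hxy : y = x
        · exact Or.inl hxy
        have hg : 0 < γ x y := by
          rcases lt_or_eq_of_le (hγ x y (Ne.symm hxy)) with h' | h'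
          · exact h'
          · exact absurd h'.symm hp
        exact Or.inr (single_mem x y (Ne.symm hxy) hg w hw hwx)
      | cons j rest ih =>
        intro x y w hw hwx hp
        rw [pathProd] at hp
        obtain ⟨h1, h2⟩ := mul_ne_zero_iff.1 hp
        by_cases hxj : j = x
        · subst hxj
          exact ih j y w hw hwx h2
        · have hg : 0 < γ x j := by
            rcases lt_or_eq_of_le (hγ x j (Ne.symm hxj)) with h' | h'
            · exact h'
            · exact absurd h'.symm h1
          have hej : (Pi.single j 1 : Fin d → ℂ) ∈ V :=
            single_mem x j (Ne.symm hxj) hg w hw hwx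
          rcases ih j y (Pi.single j 1) hej (by simp) h2 with rfl | hy
          · exact Or.inr hej
          · exact Or.inr hy
    have : Nontrivial (Fin d) := Fin.nontrivial_iff_two_le.2 hd
    have hea : (Pi.single a 1 : Fin d → ℂ) ∈ V := by
      obtain ⟨b, hb⟩ := exists_ne a
      obtain ⟨l1, hl1⟩ := hchain a b (Ne.symm hb)
      rcases key l1 a b v hvV hva hl1.ne' with rfl | heb
      · exact absurd rfl hb
      obtain ⟨l2, hl2⟩ := hchain b a hb
      rcases key l2 b a (Pi.single b 1) heb (by simp) hl2.ne' with heq | hmem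
      · exact absurd heq.symm hb
      · exact hmem
    have hek : ∀ k : Fin d, (Pi.single k 1 : Fin d → ℂ) ∈ V := by
      intro k
      by_cases hka : k = a
      · exact hka ▸ hea
      obtain ⟨l, hl⟩ := hchain a k (fun e => hka e.symm)
      rcases key l a k v hvV hva hl.ne' with rfl | hmem
      · exact hea
      · exact hmem
    rw [eq_top_iff]
    intro w _
    have hw : w = ∑ i, w i • (Pi.single i 1 : Fin d → ℂ) := by
      funext j
      simp [Pi.single_apply]
    rw [hw]
    exact Submodule.sum_mem _ fun i _ => V.smul_mem _ (hek i)
end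

section
/- If the classical Markov chain associated with a generic QMS is irreducible (for every ℓ ≠ k there exist n ≥ 0 and states j₁,…,j_n with γ_{ℓ j₁} γ_{j₁ j₂} ··· γ_{j_n k} > 0), then the Lie algebra rank condition holds: for every nonzero ξ ∈ ℂ^d the set {A ξ : A in the Lie subalgebra of M_d(ℂ) generated by G̃ and the matrices L_{ℓk}, ℓ ≠ k} spans ℂ^d, where G̃ = G − (1/2)∑_{ℓ≠k} L_{ℓk}². -/
open Matrix

attribute [local instance 100] LieRing.ofAssociativeRing

lemma aux_stdBasis_mulVec {d : ℕ} (i j : Fin d) (ξ : Fin d → ℂ) :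
    Matrix.single i j (1:ℂ) *ᵥ ξ = ξ j • (Pi.single i 1 : Fin d → ℂ) := by
  ext m
  simp [Matrix.mulVec, dotProduct, Matrix.single, Pi.single_apply, ite_and,
    eq_comm (a := i)]

lemma aux_lie_std {d : ℕ} (k b a : Fin d) (hak : a ≠ k) :
    ⁅Matrix.single k b (1:ℂ), Matrix.single b a (1:ℂ)⁆ = Matrix.single k a 1 := by
  rw [Ring.lie_def, Matrix.single_mul_single_same, Matrix.single_mul_single_of_ne (h := hak)]
  simp

lemma aux_lie_diag {d : ℕ} (j m : Fin d) :
    ⁅Matrix.single j m (1:ℂ), Matrix.single m j (1:ℂ)⁆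
      = Matrix.single j j 1 - Matrix.single m m 1 := by
  rw [Ring.lie_def, Matrix.single_mul_single_same, Matrix.single_mul_single_same]
  simp

lemma aux_pathProd_reach {d : ℕ} (γ : Fin d → Fin d → ℝ)
    (hγ : ∀ ℓ k : Fin d, ℓ ≠ k → 0 ≤ γ ℓ k) :
    ∀ (l : List (Fin d)) (a b : Fin d), pathProd γ a l b ≠ 0 →
      Relation.ReflTransGen (fun x y => x ≠ y ∧ 0 < γ x y) a b := by
  intro l
  induction l with
  | nil =>
    intro a b hne
    simp only [pathProd] at hne
    by_cases hab : a = b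
    · exact hab ▸ Relation.ReflTransGen.refl
    · exact Relation.ReflTransGen.single ⟨hab, lt_of_le_of_ne (hγ _ _ hab) (Ne.symm hne)⟩
  | cons j rest ih =>
    intro a b hne
    simp only [pathProd] at hne
    have h1 : γ a j ≠ 0 := fun h => hne (by simp [h])
    have h2 : pathProd γ j rest b ≠ 0 := fun h => hne (by simp [h])
    have hjb := ih j b h2
    by_cases haj : a = j
    · exact haj ▸ hjb
    · exact Relation.ReflTransGen.head ⟨haj, lt_of_le_of_ne (hγ _ _ haj) (Ne.symm h1)⟩ hjb

/-- if the classical Markov chain associated with a generic QMS is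
irreducible, then the Lie algebra rank condition holds: for every nonzero `ξ` the
set `{A ξ}` with `A` in the Lie subalgebra of `M_d(ℂ)` generated by
`G̃ = G - (1/2)∑_{ℓ≠k} L_{ℓk}²` and the matrices `L_{ℓk}` spans `ℂ^d`. -/
theorem generic_chain_irreducible_implies_larc {d : ℕ} (hd : 2 ≤ d)
    (γ : Fin d → Fin d → ℝ) (hγ : ∀ ℓ k : Fin d, ℓ ≠ k → 0 ≤ γ ℓ k)
    (h : Fin d → ℝ)
    (Gt : Matrix (Fin d) (Fin d) ℂ)
    (hGt : Gt = genG γ h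
      - (1/2 : ℂ) • ∑ ℓ, ∑ k, if ℓ ≠ k then (genL γ ℓ k) ^ 2 else 0)
    (hchain : ∀ ℓ k : Fin d, ℓ ≠ k → ∃ l : List (Fin d), 0 < pathProd γ ℓ l k) :
    ∀ ξ : Fin d → ℂ, ξ ≠ 0 →
      Submodule.span ℂ
        {v | ∃ A ∈ LieSubalgebra.lieSpan ℂ (Matrix (Fin d) (Fin d) ℂ)
          {A | A = Gt ∨ ∃ ℓ k : Fin d, ℓ ≠ k ∧ A = genL γ ℓ k},
          v = A *ᵥ ξ} = ⊤ := by
  set S := LieSubalgebra.lieSpan ℂ (Matrix (Fin d) (Fin d) ℂ)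
      {A | A = Gt ∨ ∃ ℓ k : Fin d, ℓ ≠ k ∧ A = genL γ ℓ k} with hS
  -- edges give Matrix.single
  have hedge : ∀ a b : Fin d, a ≠ b → 0 < γ a b → Matrix.single b a (1:ℂ) ∈ S := by
    intro a b hab hpos
    have hL : genL γ a b ∈ S :=
      LieSubalgebra.subset_lieSpan (Or.inr ⟨a, b, hab, rfl⟩)
    have hsq : (Real.sqrt (γ a b) : ℂ) ≠ 0 := by
      simp only [ne_eq, Complex.ofReal_eq_zero]
      exact (Real.sqrt_pos.mpr hpos).ne'
    have := S.smul_mem ((Real.sqrt (γ a b) : ℂ))⁻¹ hL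
    rwa [genL, smul_smul, inv_mul_cancel₀ hsq, one_smul] at this
  -- reachability gives Matrix.single
  have hreach : ∀ a b : Fin d,
      Relation.ReflTransGen (fun x y => x ≠ y ∧ 0 < γ x y) a b → a ≠ b →
      Matrix.single b a (1:ℂ) ∈ S := by
    intro a b hr
    induction hr using Relation.ReflTransGen.head_induction_on with
    | refl => intro hab; exact absurd rfl hab
    | head h' hcb ih =>
      rename_i x c
      intro hxb
      by_cases hcb' : c = b
      · subst hcb'; exact hedge _ _ h'.1 h'.2
      · have h1 : Matrix.single b c (1:ℂ) ∈ S := ih hcb'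
        have h2 : Matrix.single c x (1:ℂ) ∈ S := hedge _ _ h'.1 h'.2
        have := S.lie_mem h1 h2
        rwa [aux_lie_std _ _ _ hxb] at this
  -- all off-diagonal elementary matrices are in S
  have hstd : ∀ a b : Fin d, a ≠ b → Matrix.single b a (1:ℂ) ∈ S := by
    intro a b hab
    obtain ⟨l, hl⟩ := hchain a b hab
    exact hreach a b (aux_pathProd_reach γ hγ l a b hl.ne') hab
  -- diagonal differences
  have hdiag : ∀ j m : Fin d, j ≠ m →
      Matrix.single j j (1:ℂ) - Matrix.single m m 1 ∈ S := by
    intro j m hjm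
    have := S.lie_mem (hstd m j (Ne.symm hjm)) (hstd j m hjm)
    rwa [aux_lie_diag] at this
  intro ξ hξ
  obtain ⟨j, hj⟩ : ∃ j, ξ j ≠ 0 := Function.ne_iff.mp hξ
  set T := Submodule.span ℂ {v | ∃ A ∈ S, v = A *ᵥ ξ} with hT
  have hsingle_ne : ∀ i : Fin d, i ≠ j → (Pi.single i 1 : Fin d → ℂ) ∈ T := by
    intro i hij
    have hA : Matrix.single i j (1:ℂ) ∈ S := hstd j i (Ne.symm hij)
    have hv : (Matrix.single i j (1:ℂ) *ᵥ ξ) ∈ T :=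
      Submodule.subset_span ⟨_, hA, rfl⟩
    rw [aux_stdBasis_mulVec] at hv
    have := T.smul_mem (ξ j)⁻¹ hv
    rwa [smul_smul, inv_mul_cancel₀ hj, one_smul] at this
  have hsingle : ∀ i : Fin d, (Pi.single i 1 : Fin d → ℂ) ∈ T := by
    intro i
    by_cases hij : i = j
    · subst hij
      -- pick m ≠ i
      obtain ⟨m, hm⟩ : ∃ m : Fin d, m ≠ i := by
        rcases Decidable.eq_or_ne i ⟨0, by omega⟩ with h0 | h0
        · exact ⟨⟨1, by omega⟩, by rw [h0]; simp [Fin.ext_iff]⟩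
        · exact ⟨⟨0, by omega⟩, Ne.symm h0⟩
      have hA : Matrix.single i i (1:ℂ) - Matrix.single m m 1 ∈ S :=
        hdiag i m (Ne.symm hm)
      have hv : ((Matrix.single i i (1:ℂ) - Matrix.single m m 1) *ᵥ ξ) ∈ T :=
        Submodule.subset_span ⟨_, hA, rfl⟩
      rw [Matrix.sub_mulVec, aux_stdBasis_mulVec, aux_stdBasis_mulVec] at hv
      have hm' : (Pi.single m 1 : Fin d → ℂ) ∈ T := hsingle_ne m hm
      have h2 : (ξ i • (Pi.single i 1 : Fin d → ℂ)) ∈ T := by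
        have := T.add_mem hv (T.smul_mem (ξ m) hm')
        simpa using this
      have := T.smul_mem (ξ i)⁻¹ h2
      rwa [smul_smul, inv_mul_cancel₀ hj, one_smul] at this
    · exact hsingle_ne i hij
  rw [Submodule.eq_top_iff']
  intro x
  have hx : x = ∑ i, x i • (Pi.single i 1 : Fin d → ℂ) := by
    ext m
    simp [Pi.single_apply, Finset.sum_ite_eq', eq_comm]
  rw [hx]
  exact Submodule.sum_mem _ fun i _ => T.smul_mem _ (hsingle i)
end

section
/- Let ℓ = j₀, j₁, …, j_n, j_{n+1} = k be pairwise distinct states in {1,…,d} (n ≥ 1). Then the iterated commutator of the generic jump operators satisfies [L_{j_n k}, [L_{j_{n−1} j_n}, [ ··· , [L_{j₁ j₂}, L_{ℓ j₁}] ··· ]]] = (γ_{ℓ j₁} γ_{j₁ j₂} ··· γ_{j_n k})^{1/2} |e_k⟩⟨e_ℓ|. -/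
open Matrix

/-- for pairwise distinct states `ℓ = j₀, j₁, …, jₙ, jₙ₊₁ = k`
(`n ≥ 1`), the iterated commutator
`[L_{jₙ k}, [L_{jₙ₋₁ jₙ}, [⋯, [L_{j₁ j₂}, L_{ℓ j₁}]⋯]]]` equals
`(γ_{ℓ j₁} γ_{j₁ j₂} ⋯ γ_{jₙ k})^{1/2} |e_k⟩⟨e_ℓ|`.
Here `B i` is the inner iterated commutator built from the first `i+1` jump
operators: `B 0 = L_{j₀ j₁}` and `B (i+1) = ⁅L_{jᵢ₊₁ jᵢ₊₂}, B i⁆`. -/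
theorem generic_iterated_commutator {d : ℕ} (hd : 2 ≤ d)
    (γ : Fin d → Fin d → ℝ) (hγ : ∀ ℓ k : Fin d, ℓ ≠ k → 0 ≤ γ ℓ k)
    (n : ℕ) (hn : 1 ≤ n) (j : ℕ → Fin d)
    (hinj : ∀ a b : ℕ, a ≤ n + 1 → b ≤ n + 1 → j a = j b → a = b)
    (B : ℕ → Matrix (Fin d) (Fin d) ℂ)
    (hB0 : B 0 = genL γ (j 0) (j 1))
    (hBsucc : ∀ i : ℕ, B (i + 1) = ⁅genL γ (j (i + 1)) (j (i + 2)), B i⁆) :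
    B n = ((Real.sqrt (∏ i ∈ Finset.range (n + 1), γ (j i) (j (i + 1))) : ℝ) : ℂ) •
      Matrix.single (j (n + 1)) (j 0) 1 := by
  have hne : ∀ a b : ℕ, a ≤ n + 1 → b ≤ n + 1 → a ≠ b → j a ≠ j b := by
    intro a b ha hb hab h
    exact hab (hinj a b ha hb h)
  have hnonneg : ∀ m, m ≤ n → 0 ≤ ∏ i ∈ Finset.range (m + 1), γ (j i) (j (i + 1)) := by
    intro m hm
    apply Finset.prod_nonneg
    intro i hi
    have hi' : i < m + 1 := Finset.mem_range.mp hi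
    exact hγ _ _ (hne i (i + 1) (by omega) (by omega) (by omega))
  suffices h : ∀ m, m ≤ n →
      B m = ((Real.sqrt (∏ i ∈ Finset.range (m + 1), γ (j i) (j (i + 1))) : ℝ) : ℂ) •
        Matrix.single (j (m + 1)) (j 0) 1 from h n le_rfl
  intro m
  induction m with
  | zero =>
    intro _
    simp [hB0, genL, Finset.prod_range_one]
  | succ m ih =>
    intro hm
    have IH := ih (by omega)
    rw [hBsucc, IH, genL, Ring.lie_def]
    rw [smul_mul_smul_comm, smul_mul_smul_comm]
    rw [Matrix.single_mul_single_same, Matrix.single_mul_single_of_ne (h :=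
      (hne 0 (m + 2) (by omega) (by omega) (by omega))) (d := 1)]
    rw [smul_zero, sub_zero]
    have hp : ∏ i ∈ Finset.range (m + 1 + 1), γ (j i) (j (i + 1)) =
        (∏ i ∈ Finset.range (m + 1), γ (j i) (j (i + 1))) * γ (j (m + 1)) (j (m + 2)) :=
      Finset.prod_range_succ _ _
    rw [hp, Real.sqrt_mul (hnonneg m (by omega))]
    push_cast
    rw [mul_one, mul_comm]
end

section
/- Let d = 2, m = 1, L = iσ₂, H = σ₃ and G = −(1/2)L*L − iH = −(1/2)·𝟙 − iσ₃, where σ₂, σ₃ are the Pauli matrices. Then S(ξ) = ℂ² for every nonzero ξ ∈ ℂ²; in particular the associated QMS is irreducible even though L is anti-selfadjoint. -/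
open Matrix

/-- Iterated commutator `δ_G^n(A)`: `δ_G^0(A) = A`, `δ_G^{n+1}(A) = [G, δ_G^n(A)]`. -/
noncomputable def deltaG {d : ℕ} (G : Matrix (Fin d) (Fin d) ℂ) :
    ℕ → Matrix (Fin d) (Fin d) ℂ → Matrix (Fin d) (Fin d) ℂ
  | 0, A => A
  | n + 1, A => G * deltaG G n A - deltaG G n A * G

/-- `S(ξ)` for a single jump operator `L`: the linear span of `ξ` together with
all vectors `δ_G^{n₁}(L) δ_G^{n₂}(L) ⋯ δ_G^{n_k}(L) ξ`, `k ≥ 1`. -/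
noncomputable def SxiOne {d : ℕ} (G L : Matrix (Fin d) (Fin d) ℂ) (ξ : Fin d → ℂ) :
    Submodule ℂ (Fin d → ℂ) :=
  Submodule.span ℂ
    ({ξ} ∪ {v | ∃ l : List ℕ, l ≠ [] ∧ v = (l.map fun n => deltaG G n L).prod *ᵥ ξ})

lemma Lmul (ξ : Fin 2 → ℂ) : (!![0,1;-1,0] : Matrix (Fin 2) (Fin 2) ℂ) *ᵥ ξ = ![ξ 1, -ξ 0] := by
  funext i; fin_cases i <;> simp [Matrix.mulVec, dotProduct, Fin.sum_univ_two]

lemma Dmul (ξ : Fin 2 → ℂ) :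
    (!![0,-2*Complex.I;-2*Complex.I,0] : Matrix (Fin 2) (Fin 2) ℂ) *ᵥ ξ
      = ![(-2*Complex.I) * ξ 1, (-2*Complex.I) * ξ 0] := by
  funext i; fin_cases i <;> simp [Matrix.mulVec, dotProduct, Fin.sum_univ_two]

lemma key_span (ξ : Fin 2 → ℂ) (hξ : ξ ≠ 0) (V : Submodule ℂ (Fin 2 → ℂ))
    (h1 : ξ ∈ V) (h2 : (![ξ 1, -ξ 0] : Fin 2 → ℂ) ∈ V)
    (h3 : (![(-2*Complex.I) * ξ 1, (-2*Complex.I) * ξ 0] : Fin 2 → ℂ) ∈ V) :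
    V = ⊤ := by
  have hI : Complex.I/2 * (-2*Complex.I) = 1 := by linear_combination -Complex.I_sq
  have hw : (![ξ 1, ξ 0] : Fin 2 → ℂ) ∈ V := by
    have := V.smul_mem (Complex.I/2) h3
    convert this using 1
    funext i; fin_cases i <;> simp [← mul_assoc, hI]
  have hsum : (![2 * ξ 1, 0] : Fin 2 → ℂ) ∈ V := by
    have := V.add_mem hw h2
    convert this using 1
    funext i; fin_cases i <;> simp <;> ring
  have hdiff : (![0, 2 * ξ 0] : Fin 2 → ℂ) ∈ V := by
    have := V.sub_mem hw h2
    convert this using 1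
    funext i; fin_cases i <;> simp <;> ring
  -- get both basis vectors in V
  have hbase : (![1,0] : Fin 2 → ℂ) ∈ V ∧ (![0,1] : Fin 2 → ℂ) ∈ V := by
    by_cases h0 : ξ 0 = 0
    · have h1' : ξ 1 ≠ 0 := by
        intro h1'
        apply hξ; funext i; fin_cases i <;> simp [h0, h1']
      have he0 : (![1,0] : Fin 2 → ℂ) ∈ V := by
        have := V.smul_mem ((2 * ξ 1)⁻¹) hsum
        convert this using 1
        funext i; fin_cases i <;> simp <;> field_simp <;> ring
      have he1 : (![0,1] : Fin 2 → ℂ) ∈ V := by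
        have := V.smul_mem ((ξ 1)⁻¹) h1
        convert this using 1
        funext i; fin_cases i <;> simp [h0, inv_mul_cancel₀ h1']
      exact ⟨he0, he1⟩
    · have he1 : (![0,1] : Fin 2 → ℂ) ∈ V := by
        have := V.smul_mem ((2 * ξ 0)⁻¹) hdiff
        convert this using 1
        funext i; fin_cases i <;> simp <;> field_simp <;> ring
      have he0 : (![1,0] : Fin 2 → ℂ) ∈ V := by
        have hLin : (![ξ 0, 0] : Fin 2 → ℂ) ∈ V := by
          have := V.sub_mem h1 (V.smul_mem (ξ 1) he1)
          convert this using 1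
          funext i; fin_cases i <;> simp
        have := V.smul_mem ((ξ 0)⁻¹) hLin
        convert this using 1
        funext i; fin_cases i <;> simp [inv_mul_cancel₀ h0]
      exact ⟨he0, he1⟩
  obtain ⟨he0, he1⟩ := hbase
  rw [Submodule.eq_top_iff']
  intro v
  have hv : v = v 0 • (![1,0] : Fin 2 → ℂ) + v 1 • (![0,1] : Fin 2 → ℂ) := by
    funext i; fin_cases i <;> simp
  rw [hv]
  exact V.add_mem (V.smul_mem _ he0) (V.smul_mem _ he1)

/-- for `d = 2`, `m = 1`, `L = iσ₂`, `H = σ₃` and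
`G = -(1/2)L*L - iH = -(1/2)𝟙 - iσ₃`, one has `S(ξ) = ℂ²` for every nonzero `ξ`;
in particular the associated QMS is irreducible even though `L` is anti-selfadjoint. -/
theorem pauli_example_Sxi_eq_top
    (σ₂ σ₃ L H G : Matrix (Fin 2) (Fin 2) ℂ)
    (hσ₂ : σ₂ = !![0, -Complex.I; Complex.I, 0])
    (hσ₃ : σ₃ = !![1, 0; 0, -1])
    (hL : L = Complex.I • σ₂) (hH : H = σ₃)
    (hG : G = (-(1/2 : ℂ)) • (Lᴴ * L) - Complex.I • H) :
    G = (-(1/2 : ℂ)) • (1 : Matrix (Fin 2) (Fin 2) ℂ) - Complex.I • σ₃ ∧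
    Lᴴ = -L ∧
    (∀ ξ : Fin 2 → ℂ, ξ ≠ 0 → SxiOne G L ξ = ⊤) ∧
    (∀ V : Submodule ℂ (Fin 2 → ℂ),
      (∀ v ∈ V, G *ᵥ v ∈ V) → (∀ v ∈ V, L *ᵥ v ∈ V) → V = ⊥ ∨ V = ⊤) := by
  subst hσ₂ hσ₃ hL hH hG
  have hLc : Complex.I • (!![0, -Complex.I; Complex.I, 0] : Matrix (Fin 2) (Fin 2) ℂ)
      = !![0,1;-1,0] := by
    ext i j; fin_cases i <;> fin_cases j <;>
      simp [Complex.I_mul_I] <;> linear_combination -Complex.I_sq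
  have hLH : (Complex.I • (!![0, -Complex.I; Complex.I, 0] : Matrix (Fin 2) (Fin 2) ℂ))ᴴ
      = !![0,-1;1,0] := by
    rw [hLc]
    ext i j; fin_cases i <;> fin_cases j <;> simp [conjTranspose_apply]
  have hLHL : (!![0,-1;1,0] : Matrix (Fin 2) (Fin 2) ℂ) * !![0,1;-1,0] = 1 := by
    ext i j; fin_cases i <;> fin_cases j <;>
      simp [Matrix.mul_apply, Fin.sum_univ_two, Matrix.one_apply]
  have hGc : (-(1/2 : ℂ)) • ((Complex.I • (!![0, -Complex.I; Complex.I, 0] : Matrix (Fin 2) (Fin 2) ℂ))ᴴ * (Complex.I • !![0, -Complex.I; Complex.I, 0])) - Complex.I • !![1, 0; 0, -1]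
      = !![-(1/2) - Complex.I, 0; 0, -(1/2) + Complex.I] := by
    rw [hLH, hLc, hLHL]
    ext i j; fin_cases i <;> fin_cases j <;>
      simp [Matrix.one_apply] <;> ring
  have hDc : (!![-(1/2) - Complex.I, 0; 0, -(1/2) + Complex.I] : Matrix (Fin 2) (Fin 2) ℂ) * !![0,1;-1,0]
      - !![0,1;-1,0] * !![-(1/2) - Complex.I, 0; 0, -(1/2) + Complex.I]
      = !![0,-2*Complex.I;-2*Complex.I,0] := by
    ext i j; fin_cases i <;> fin_cases j <;>
      simp [Matrix.mul_apply, Fin.sum_univ_two] <;> ring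
  set L' : Matrix (Fin 2) (Fin 2) ℂ := Complex.I • !![0, -Complex.I; Complex.I, 0] with hL'
  set G' : Matrix (Fin 2) (Fin 2) ℂ :=
    (-(1/2 : ℂ)) • (L'ᴴ * L') - Complex.I • !![1, 0; 0, -1] with hG'
  have hG'c : G' = !![-(1/2) - Complex.I, 0; 0, -(1/2) + Complex.I] := hGc
  have hDelta0 : deltaG G' 0 L' = !![0,1;-1,0] := hLc
  have hDelta1 : deltaG G' 1 L' = !![0,-2*Complex.I;-2*Complex.I,0] := by
    show G' * deltaG G' 0 L' - deltaG G' 0 L' * G' = _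
    rw [hDelta0, hG'c, hDc]
  refine ⟨?_, ?_, ?_, ?_⟩
  · rw [hG'c]
    ext i j; fin_cases i <;> fin_cases j <;> simp [Matrix.one_apply]
  · rw [hLH, hLc]
    ext i j; fin_cases i <;> fin_cases j <;> simp
  · intro ξ hξ
    apply key_span ξ hξ
    · exact Submodule.subset_span (Or.inl rfl)
    · apply Submodule.subset_span
      refine Or.inr ⟨[0], by simp, ?_⟩
      simp [hDelta0, Lmul, Matrix.vecHead, Matrix.vecTail]
    · apply Submodule.subset_span
      refine Or.inr ⟨[1], by simp, ?_⟩
      simp [hDelta1, Dmul, Matrix.vecHead, Matrix.vecTail]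
  · intro V hGV hLV
    by_cases hbot : V = ⊥
    · exact Or.inl hbot
    · right
      obtain ⟨ξ, hξV, hξ⟩ := Submodule.exists_mem_ne_zero_of_ne_bot hbot
      apply key_span ξ hξ V hξV
      · have := hLV ξ hξV
        rwa [hLc, Lmul] at this
      · have h3' : (!![0,-2*Complex.I;-2*Complex.I,0] : Matrix (Fin 2) (Fin 2) ℂ) *ᵥ ξ ∈ V := by
          have heq : (!![0,-2*Complex.I;-2*Complex.I,0] : Matrix (Fin 2) (Fin 2) ℂ) *ᵥ ξ
              = G' *ᵥ (L' *ᵥ ξ) - L' *ᵥ (G' *ᵥ ξ) := by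
            rw [mulVec_mulVec, mulVec_mulVec, ← sub_mulVec, hG'c, hLc, hDc]
          rw [heq]
          exact V.sub_mem (hGV _ (hLV _ hξV)) (hLV _ (hGV _ hξV))
        rwa [Dmul] at h3'
end

section
/- Let L and G be the explicit 3×3 matrices L = [[0,1,0],[−1,0,0],[0,0,0]] and G = [[−1/2,0,−1],[0,−1/2,0],[1,0,0]]. Then the only subspaces of ℂ³ invariant under both L and G are {0} and ℂ³; that is, the associated QMS is irreducible. -/
open Matrix

/-- for the explicit `3×3` matrices
`L = [[0,1,0],[-1,0,0],[0,0,0]]` and `G = [[-1/2,0,-1],[0,-1/2,0],[1,0,0]]`,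
the only subspaces of `ℂ³` invariant under both `L` and `G` are `{0}` and `ℂ³`;
that is, the associated QMS is irreducible. -/
theorem example_3x3_irreducible
    (L G : Matrix (Fin 3) (Fin 3) ℂ)
    (hL : L = !![0, 1, 0; -1, 0, 0; 0, 0, 0])
    (hG : G = !![-1/2, 0, -1; 0, -1/2, 0; 1, 0, 0]) :
    ∀ V : Submodule ℂ (Fin 3 → ℂ),
      (∀ v ∈ V, G *ᵥ v ∈ V) → (∀ v ∈ V, L *ᵥ v ∈ V) → V = ⊥ ∨ V = ⊤ := by
  subst hL hG
  intro V hGV hLV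
  by_cases hbot : V = ⊥
  · exact Or.inl hbot
  right
  obtain ⟨v, hvV, hvne⟩ := Submodule.exists_mem_ne_zero_of_ne_bot hbot
  set e0 : Fin 3 → ℂ := ![1,0,0] with he0
  set e1 : Fin 3 → ℂ := ![0,1,0] with he1
  set e2 : Fin 3 → ℂ := ![0,0,1] with he2
  have key : e2 ∈ V → V = ⊤ := by
    intro h2
    have h0 : e0 ∈ V := by
      have := hGV _ h2
      have heq : -(!![-1/2, 0, -1; 0, -1/2, 0; 1, 0, 0] *ᵥ e2) = e0 := by
        funext i
        fin_cases i <;>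
          simp [Matrix.mulVec, dotProduct, Fin.sum_univ_three, he0, he2]
      rw [← heq]
      exact V.neg_mem this
    have h1 : e1 ∈ V := by
      have := hLV _ h0
      have heq : -(!![0, 1, 0; -1, 0, 0; 0, 0, 0] *ᵥ e0) = e1 := by
        funext i
        fin_cases i <;>
          simp [Matrix.mulVec, dotProduct, Fin.sum_univ_three, he0, he1]
      rw [← heq]
      exact V.neg_mem this
    rw [Submodule.eq_top_iff']
    intro x
    have hx : x = x 0 • e0 + x 1 • e1 + x 2 • e2 := by
      funext i
      fin_cases i <;> simp [he0, he1, he2]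
    rw [hx]
    exact V.add_mem (V.add_mem (V.smul_mem _ h0) (V.smul_mem _ h1)) (V.smul_mem _ h2)
  -- step 1: ![0,0,v 2] ∈ V
  have hc : (v 2) • e2 ∈ V := by
    have hm := V.add_mem hvV (hLV _ (hLV _ hvV))
    have heq : v + (!![0, 1, 0; -1, 0, 0; 0, 0, 0] *ᵥ (!![0, 1, 0; -1, 0, 0; 0, 0, 0] *ᵥ v)) = (v 2) • e2 := by
      funext i
      fin_cases i <;>
        simp [Matrix.mulVec, dotProduct, Fin.sum_univ_three, he2] <;> ring
    rw [← heq]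
    exact hm
  by_cases hv2 : v 2 = 0
  · -- step 2: ![0,0,v 0] ∈ V
    have ha : (v 0) • e2 ∈ V := by
      have hm := V.add_mem (hGV _ hvV) (V.smul_mem (2:ℂ)⁻¹ hvV)
      have heq : (!![-1/2, 0, -1; 0, -1/2, 0; 1, 0, 0] *ᵥ v) + (2:ℂ)⁻¹ • v = (v 0) • e2 := by
        funext i
        fin_cases i <;>
          simp [Matrix.mulVec, dotProduct, Fin.sum_univ_three, he2, hv2] <;> ring
      rw [← heq]
      exact hm
    by_cases hv0 : v 0 = 0
    · -- then v 1 ≠ 0 and v = v 1 • e1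
      have hv1 : v 1 ≠ 0 := by
        intro h
        apply hvne
        funext i
        fin_cases i <;> simp [hv0, hv2, h]
      have h1 : e1 ∈ V := by
        have hveq : v = (v 1) • e1 := by
          funext i
          fin_cases i <;> simp [he1, hv0, hv2]
        have hm : (v 1) • e1 ∈ V := hveq ▸ hvV
        have := V.smul_mem (v 1)⁻¹ hm
        rwa [smul_smul, inv_mul_cancel₀ hv1, one_smul] at this
      have h0 : e0 ∈ V := by
        have := hLV _ h1
        have heq : !![0, 1, 0; -1, 0, 0; 0, 0, 0] *ᵥ e1 = e0 := by
          funext i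
          fin_cases i <;>
            simp [Matrix.mulVec, dotProduct, Fin.sum_univ_three, he0, he1]
        rwa [heq] at this
      have h2 : e2 ∈ V := by
        have hm := V.add_mem (hGV _ h0) (V.smul_mem (2:ℂ)⁻¹ h0)
        have heq : (!![-1/2, 0, -1; 0, -1/2, 0; 1, 0, 0] *ᵥ e0) + (2:ℂ)⁻¹ • e0 = e2 := by
          funext i
          fin_cases i <;>
            simp [Matrix.mulVec, dotProduct, Fin.sum_univ_three, he0, he2] <;> ring
        rwa [heq] at hm
      exact key h2
    · have h2 : e2 ∈ V := by
        have := V.smul_mem (v 0)⁻¹ ha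
        rwa [smul_smul, inv_mul_cancel₀ hv0, one_smul] at this
      exact key h2
  · have h2 : e2 ∈ V := by
      have := V.smul_mem (v 2)⁻¹ hc
      rwa [smul_smul, inv_mul_cancel₀ hv2, one_smul] at this
    exact key h2
end

section
/- Let L = [[0,1,0],[−1,0,0],[0,0,0]], G = [[−1/2,0,−1],[0,−1/2,0],[1,0,0]] and G̃ = G − (1/2)L² in M₃(ℂ), and let e₁, e₂, e₃ be the standard basis of ℂ³. Then for each k ∈ {1,2,3}, the linear span of the set {A e_k : A in the Lie subalgebra of M₃(ℂ) generated by G̃ and L} is two-dimensional (it equals the span of the two standard basis vectors other than e_k); in particular the Lie algebra rank condition fails for this GKSL datum even though the associated QMS is irreducible. -/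
open Matrix

attribute [local instance 100] LieRing.ofAssociativeRing

namespace Larc18

abbrev Mat := Matrix (Fin 3) (Fin 3) ℂ

def A1 : Mat := !![0,0,-1;0,0,0;1,0,0]
def A2 : Mat := !![0,1,0;-1,0,0;0,0,0]
def A3 : Mat := !![0,0,0;0,0,-1;0,1,0]
noncomputable def AG : Mat := !![-1/2, 0, -1; 0, -1/2, 0; 1, 0, 0]

lemma br12 : A1 * A2 - A2 * A1 = A3 := by
  ext i j; fin_cases i <;> fin_cases j <;>
    norm_num [A1, A2, A3, Matrix.mul_apply, Fin.sum_univ_three]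
lemma br13 : A1 * A3 - A3 * A1 = -A2 := by
  ext i j; fin_cases i <;> fin_cases j <;>
    norm_num [A1, A2, A3, Matrix.mul_apply, Fin.sum_univ_three]
lemma br23 : A2 * A3 - A3 * A2 = A1 := by
  ext i j; fin_cases i <;> fin_cases j <;>
    norm_num [A1, A2, A3, Matrix.mul_apply, Fin.sum_univ_three]

noncomputable def W : Submodule ℂ Mat := Submodule.span ℂ {A1, A2, A3}

lemma mem1 : A1 ∈ W := Submodule.subset_span (by simp)
lemma mem2 : A2 ∈ W := Submodule.subset_span (by simp)
lemma mem3 : A3 ∈ W := Submodule.subset_span (by simp)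

lemma bracket_closed {x y : Mat} (hx : x ∈ W) (hy : y ∈ W) : ⁅x, y⁆ ∈ W := by
  induction hx, hy using Submodule.span_induction₂ with
  | mem_mem a b ha hb =>
    rcases ha with rfl | rfl | rfl <;> rcases hb with rfl | rfl | rfl <;>
      simp only [Ring.lie_def]
    · exact (by rw [sub_self]; exact W.zero_mem)
    · rw [br12]; exact mem3
    · rw [br13]; exact W.neg_mem mem2
    · rw [show A2 * A1 - A1 * A2 = -A3 by rw [← br12]; abel]; exact W.neg_mem mem3
    · rw [sub_self]; exact W.zero_mem
    · rw [br23]; exact mem1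
    · rw [show A3 * A1 - A1 * A3 = A2 by rw [← neg_sub, br13, neg_neg]]; exact mem2
    · rw [show A3 * A2 - A2 * A3 = -A1 by rw [← br23]; abel]; exact W.neg_mem mem1
    · rw [sub_self]; exact W.zero_mem
  | zero_left y hy => simp
  | zero_right x hx => simp
  | add_left x y z _ _ _ h1 h2 => rw [add_lie]; exact W.add_mem h1 h2
  | add_right x y z _ _ _ h1 h2 => rw [lie_add]; exact W.add_mem h1 h2
  | smul_left r x y _ _ h => rw [smul_lie]; exact W.smul_mem r h
  | smul_right r x y _ _ h => rw [lie_smul]; exact W.smul_mem r h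

noncomputable def K : LieSubalgebra ℂ Mat :=
  { W with lie_mem' := fun hx hy => bracket_closed hx hy }

lemma lieSpan_le_K : LieSubalgebra.lieSpan ℂ Mat {A1, A2} ≤ K := by
  rw [LieSubalgebra.lieSpan_le]
  rintro x (rfl | rfl)
  · exact mem1
  · exact mem2

abbrev e (k : Fin 3) : Fin 3 → ℂ := Pi.single k 1

lemma v10 : A1 *ᵥ e 0 = e 2 := by
  funext i; fin_cases i <;> simp [A1, mulVec_single, Matrix.vecHead, Matrix.vecTail]
lemma v11 : A1 *ᵥ e 1 = 0 := by
  funext i; fin_cases i <;> simp [A1, mulVec_single, Matrix.vecHead, Matrix.vecTail]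
lemma v12 : A1 *ᵥ e 2 = -e 0 := by
  funext i; fin_cases i <;> simp [A1, mulVec_single, Matrix.vecHead, Matrix.vecTail]
lemma v20 : A2 *ᵥ e 0 = -e 1 := by
  funext i; fin_cases i <;> simp [A2, mulVec_single, Matrix.vecHead, Matrix.vecTail]
lemma v21 : A2 *ᵥ e 1 = e 0 := by
  funext i; fin_cases i <;> simp [A2, mulVec_single, Matrix.vecHead, Matrix.vecTail]
lemma v22 : A2 *ᵥ e 2 = 0 := by
  funext i; fin_cases i <;> simp [A2, mulVec_single, Matrix.vecHead, Matrix.vecTail]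
lemma v30 : A3 *ᵥ e 0 = 0 := by
  funext i; fin_cases i <;> simp [A3, mulVec_single, Matrix.vecHead, Matrix.vecTail]
lemma v31 : A3 *ᵥ e 1 = e 2 := by
  funext i; fin_cases i <;> simp [A3, mulVec_single, Matrix.vecHead, Matrix.vecTail]
lemma v32 : A3 *ᵥ e 2 = -e 1 := by
  funext i; fin_cases i <;> simp [A3, mulVec_single, Matrix.vecHead, Matrix.vecTail]

lemma li_single : LinearIndependent ℂ (fun i : Fin 3 => (Pi.single i 1 : Fin 3 → ℂ)) := by
  have h : ⇑(Pi.basisFun ℂ (Fin 3)) = fun i => (Pi.single i 1 : Fin 3 → ℂ) :=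
    funext fun i => Pi.basisFun_apply ℂ (Fin 3) i
  rw [← h]; exact (Pi.basisFun ℂ (Fin 3)).linearIndependent

lemma rank_pair {a b : Fin 3} (h : a ≠ b) :
    Module.finrank ℂ
      (Submodule.span ℂ ({Pi.single a 1, Pi.single b 1} : Set (Fin 3 → ℂ))) = 2 := by
  have hinj : Function.Injective ![a, b] := by
    intro x y hxy
    fin_cases x <;> fin_cases y <;> simp_all
  have li2 : LinearIndependent ℂ ![(Pi.single a 1 : Fin 3 → ℂ), Pi.single b 1] := by
    have h2 := li_single.comp ![a, b] hinj
    convert h2 using 1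
    funext j; fin_cases j <;> rfl
  have hr : Set.range ![(Pi.single a 1 : Fin 3 → ℂ), Pi.single b 1]
      = {Pi.single a 1, Pi.single b 1} := by
    ext v; simp [Fin.exists_fin_two]; tauto
  rw [← hr, finrank_span_eq_card li2]
  simp

/-- the span of `{A *ᵥ e k}` equals the span of the other basis vectors. -/
lemma span_eq (k : Fin 3) :
    Submodule.span ℂ
        {v | ∃ A ∈ LieSubalgebra.lieSpan ℂ Mat {A1, A2}, v = A *ᵥ Pi.single k 1}
      = Submodule.span ℂ {v | ∃ i : Fin 3, i ≠ k ∧ v = (Pi.single i 1 : Fin 3 → ℂ)} := by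
  have memL1 : A1 ∈ LieSubalgebra.lieSpan ℂ Mat {A1, A2} :=
    LieSubalgebra.subset_lieSpan (by simp)
  have memL2 : A2 ∈ LieSubalgebra.lieSpan ℂ Mat {A1, A2} :=
    LieSubalgebra.subset_lieSpan (by simp)
  have memL3 : A3 ∈ LieSubalgebra.lieSpan ℂ Mat {A1, A2} := by
    have h : A3 = ⁅A1, A2⁆ := by rw [Ring.lie_def, br12]
    rw [h]; exact LieSubalgebra.lie_mem _ memL1 memL2
  apply le_antisymm
  · rw [Submodule.span_le]
    rintro v ⟨A, hA, rfl⟩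
    have hAW : A ∈ W := lieSpan_le_K hA
    clear hA
    induction hAW using Submodule.span_induction with
    | mem x hx =>
      rcases hx with rfl | rfl | rfl <;>
        rcases (by decide : ∀ j : Fin 3, j = 0 ∨ j = 1 ∨ j = 2) k with rfl | rfl | rfl
      · rw [show (Pi.single (0 : Fin 3) 1 : Fin 3 → ℂ) = e 0 from rfl, v10]
        exact Submodule.subset_span ⟨2, by decide, rfl⟩
      · rw [show (Pi.single (1 : Fin 3) 1 : Fin 3 → ℂ) = e 1 from rfl, v11]
        exact Submodule.zero_mem _
      · rw [show (Pi.single (2 : Fin 3) 1 : Fin 3 → ℂ) = e 2 from rfl, v12]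
        exact Submodule.neg_mem _ (Submodule.subset_span ⟨0, by decide, rfl⟩)
      · rw [show (Pi.single (0 : Fin 3) 1 : Fin 3 → ℂ) = e 0 from rfl, v20]
        exact Submodule.neg_mem _ (Submodule.subset_span ⟨1, by decide, rfl⟩)
      · rw [show (Pi.single (1 : Fin 3) 1 : Fin 3 → ℂ) = e 1 from rfl, v21]
        exact Submodule.subset_span ⟨0, by decide, rfl⟩
      · rw [show (Pi.single (2 : Fin 3) 1 : Fin 3 → ℂ) = e 2 from rfl, v22]
        exact Submodule.zero_mem _
      · rw [show (Pi.single (0 : Fin 3) 1 : Fin 3 → ℂ) = e 0 from rfl, v30]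
        exact Submodule.zero_mem _
      · rw [show (Pi.single (1 : Fin 3) 1 : Fin 3 → ℂ) = e 1 from rfl, v31]
        exact Submodule.subset_span ⟨2, by decide, rfl⟩
      · rw [show (Pi.single (2 : Fin 3) 1 : Fin 3 → ℂ) = e 2 from rfl, v32]
        exact Submodule.neg_mem _ (Submodule.subset_span ⟨1, by decide, rfl⟩)
    | zero => rw [zero_mulVec]; exact Submodule.zero_mem _
    | add x y hx hy ihx ihy => rw [add_mulVec]; exact Submodule.add_mem _ ihx ihy
    | smul c x hx ihx => rw [smul_mulVec]; exact Submodule.smul_mem _ c ihx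
  · rw [Submodule.span_le]
    rintro v ⟨i, hik, rfl⟩
    rcases (by decide : ∀ j : Fin 3, j = 0 ∨ j = 1 ∨ j = 2) k with rfl | rfl | rfl <;>
      rcases (by decide : ∀ j : Fin 3, j = 0 ∨ j = 1 ∨ j = 2) i with rfl | rfl | rfl <;>
      first
      | exact absurd rfl hik
      | skip
    · rw [show (Pi.single (1 : Fin 3) 1 : Fin 3 → ℂ) = -(A2 *ᵥ e 0) by rw [v20, neg_neg]]
      exact Submodule.neg_mem _ (Submodule.subset_span ⟨A2, memL2, rfl⟩)
    · exact Submodule.subset_span ⟨A1, memL1, v10.symm⟩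
    · exact Submodule.subset_span ⟨A2, memL2, v21.symm⟩
    · exact Submodule.subset_span ⟨A3, memL3, v31.symm⟩
    · rw [show (Pi.single (0 : Fin 3) 1 : Fin 3 → ℂ) = -(A1 *ᵥ e 2) by rw [v12, neg_neg]]
      exact Submodule.neg_mem _ (Submodule.subset_span ⟨A1, memL1, rfl⟩)
    · rw [show (Pi.single (1 : Fin 3) 1 : Fin 3 → ℂ) = -(A3 *ᵥ e 2) by rw [v32, neg_neg]]
      exact Submodule.neg_mem _ (Submodule.subset_span ⟨A3, memL3, rfl⟩)

lemma rank_two (k : Fin 3) :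
    Module.finrank ℂ
      (Submodule.span ℂ {v | ∃ i : Fin 3, i ≠ k ∧ v = (Pi.single i 1 : Fin 3 → ℂ)}) = 2 := by
  rcases (by decide : ∀ j : Fin 3, j = 0 ∨ j = 1 ∨ j = 2) k with rfl | rfl | rfl
  · rw [show {v | ∃ i : Fin 3, i ≠ (0 : Fin 3) ∧ v = (Pi.single i 1 : Fin 3 → ℂ)}
        = ({Pi.single 1 1, Pi.single 2 1} : Set (Fin 3 → ℂ)) by
      ext v
      constructor
      · rintro ⟨i, hi, rfl⟩; fin_cases i
        · exact absurd rfl hi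
        · exact Or.inl rfl
        · exact Or.inr rfl
      · rintro (rfl | rfl)
        · exact ⟨1, by decide, rfl⟩
        · exact ⟨2, by decide, rfl⟩]
    exact rank_pair (by decide)
  · rw [show {v | ∃ i : Fin 3, i ≠ (1 : Fin 3) ∧ v = (Pi.single i 1 : Fin 3 → ℂ)}
        = ({Pi.single 0 1, Pi.single 2 1} : Set (Fin 3 → ℂ)) by
      ext v
      constructor
      · rintro ⟨i, hi, rfl⟩; fin_cases i
        · exact Or.inl rfl
        · exact absurd rfl hi
        · exact Or.inr rfl
      · rintro (rfl | rfl)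
        · exact ⟨0, by decide, rfl⟩
        · exact ⟨2, by decide, rfl⟩]
    exact rank_pair (by decide)
  · rw [show {v | ∃ i : Fin 3, i ≠ (2 : Fin 3) ∧ v = (Pi.single i 1 : Fin 3 → ℂ)}
        = ({Pi.single 0 1, Pi.single 1 1} : Set (Fin 3 → ℂ)) by
      ext v
      constructor
      · rintro ⟨i, hi, rfl⟩; fin_cases i
        · exact Or.inl rfl
        · exact Or.inr rfl
        · exact absurd rfl hi
      · rintro (rfl | rfl)
        · exact ⟨0, by decide, rfl⟩
        · exact ⟨1, by decide, rfl⟩]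
    exact rank_pair (by decide)

lemma trich : ∀ j : Fin 3, j = 0 ∨ j = 1 ∨ j = 2 := by decide

lemma idGt : A1 = AG - (1/2 : ℂ) • (A2 * A2) := by
  ext i j; fin_cases i <;> fin_cases j <;>
    norm_num [A1, A2, AG, Matrix.mul_apply, Fin.sum_univ_three]
lemma d00 : Matrix.single (0 : Fin 3) 0 (1 : ℂ) = (-(1/2 : ℂ)) • (A2*A2 + A1*A1 - A3*A3) := by
  ext i j; fin_cases i <;> fin_cases j <;>
    norm_num [A1, A2, A3, Matrix.single, Matrix.mul_apply, Fin.sum_univ_three, Matrix.vecHead, Matrix.vecTail, Fin.ext_iff, Matrix.cons_val_two]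
lemma d11 : Matrix.single (1 : Fin 3) 1 (1 : ℂ) = (-(1/2 : ℂ)) • (A2*A2 + A3*A3 - A1*A1) := by
  ext i j; fin_cases i <;> fin_cases j <;>
    norm_num [A1, A2, A3, Matrix.single, Matrix.mul_apply, Fin.sum_univ_three, Matrix.vecHead, Matrix.vecTail, Fin.ext_iff, Matrix.cons_val_two]
lemma d22 : Matrix.single (2 : Fin 3) 2 (1 : ℂ) = (-(1/2 : ℂ)) • (A1*A1 + A3*A3 - A2*A2) := by
  ext i j; fin_cases i <;> fin_cases j <;>
    norm_num [A1, A2, A3, Matrix.single, Matrix.mul_apply, Fin.sum_univ_three, Matrix.vecHead, Matrix.vecTail, Fin.ext_iff, Matrix.cons_val_two]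
lemma o01 : Matrix.single (0 : Fin 3) 1 (1 : ℂ) = Matrix.single (0 : Fin 3) 0 1 * A2 := by
  ext i j; fin_cases i <;> fin_cases j <;>
    norm_num [A2, Matrix.single, Matrix.mul_apply, Fin.sum_univ_three, Matrix.vecHead, Matrix.vecTail, Fin.ext_iff]
lemma o02 : Matrix.single (0 : Fin 3) 2 (1 : ℂ) = -(Matrix.single (0 : Fin 3) 0 1 * A1) := by
  ext i j; fin_cases i <;> fin_cases j <;>
    norm_num [A1, Matrix.single, Matrix.mul_apply, Fin.sum_univ_three, Matrix.vecHead, Matrix.vecTail, Fin.ext_iff]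
lemma o10 : Matrix.single (1 : Fin 3) 0 (1 : ℂ) = -(Matrix.single (1 : Fin 3) 1 1 * A2) := by
  ext i j; fin_cases i <;> fin_cases j <;>
    norm_num [A2, Matrix.single, Matrix.mul_apply, Fin.sum_univ_three, Matrix.vecHead, Matrix.vecTail, Fin.ext_iff]
lemma o12 : Matrix.single (1 : Fin 3) 2 (1 : ℂ) = -(Matrix.single (1 : Fin 3) 1 1 * A3) := by
  ext i j; fin_cases i <;> fin_cases j <;>
    norm_num [A3, Matrix.single, Matrix.mul_apply, Fin.sum_univ_three, Matrix.vecHead, Matrix.vecTail, Fin.ext_iff]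
lemma o20 : Matrix.single (2 : Fin 3) 0 (1 : ℂ) = Matrix.single (2 : Fin 3) 2 1 * A1 := by
  ext i j; fin_cases i <;> fin_cases j <;>
    norm_num [A1, Matrix.single, Matrix.mul_apply, Fin.sum_univ_three, Matrix.vecHead, Matrix.vecTail, Fin.ext_iff, Matrix.cons_val_two]
lemma o21 : Matrix.single (2 : Fin 3) 1 (1 : ℂ) = Matrix.single (2 : Fin 3) 2 1 * A3 := by
  ext i j; fin_cases i <;> fin_cases j <;>
    norm_num [A3, Matrix.single, Matrix.mul_apply, Fin.sum_univ_three, Matrix.vecHead, Matrix.vecTail, Fin.ext_iff, Matrix.cons_val_two]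
lemma br12' : A3 = A1 * A2 - A2 * A1 := by
  ext i j; fin_cases i <;> fin_cases j <;>
    norm_num [A1, A2, A3, Matrix.mul_apply, Fin.sum_univ_three]

lemma irr (V : Submodule ℂ (Fin 3 → ℂ))
    (hVG : ∀ v ∈ V, AG *ᵥ v ∈ V) (hVL : ∀ v ∈ V, A2 *ᵥ v ∈ V) : V = ⊥ ∨ V = ⊤ := by
  rcases eq_or_ne V ⊥ with hbot | hbot
  · exact Or.inl hbot
  right
  obtain ⟨v, hvV, hv0⟩ := Submodule.ne_bot_iff V |>.mp hbot
  have sA1 : ∀ w ∈ V, A1 *ᵥ w ∈ V := by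
    intro w hw
    rw [idGt, sub_mulVec, smul_mulVec, ← mulVec_mulVec]
    exact V.sub_mem (hVG w hw) (V.smul_mem _ (hVL _ (hVL w hw)))
  have sA3 : ∀ w ∈ V, A3 *ᵥ w ∈ V := by
    intro w hw
    rw [br12', sub_mulVec, ← mulVec_mulVec, ← mulVec_mulVec]
    exact V.sub_mem (sA1 _ (hVL _ hw)) (hVL _ (sA1 _ hw))
  have sd : ∀ i : Fin 3, ∀ w ∈ V, Matrix.single i i (1:ℂ) *ᵥ w ∈ V := by
    intro i w hw
    rcases trich i with rfl | rfl | rfl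
    · rw [d00, smul_mulVec, sub_mulVec, add_mulVec, ← mulVec_mulVec, ← mulVec_mulVec,
        ← mulVec_mulVec]
      exact V.smul_mem _ (V.sub_mem (V.add_mem (hVL _ (hVL _ hw)) (sA1 _ (sA1 _ hw)))
        (sA3 _ (sA3 _ hw)))
    · rw [d11, smul_mulVec, sub_mulVec, add_mulVec, ← mulVec_mulVec, ← mulVec_mulVec,
        ← mulVec_mulVec]
      exact V.smul_mem _ (V.sub_mem (V.add_mem (hVL _ (hVL _ hw)) (sA3 _ (sA3 _ hw)))
        (sA1 _ (sA1 _ hw)))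
    · rw [d22, smul_mulVec, sub_mulVec, add_mulVec, ← mulVec_mulVec, ← mulVec_mulVec,
        ← mulVec_mulVec]
      exact V.smul_mem _ (V.sub_mem (V.add_mem (sA1 _ (sA1 _ hw)) (sA3 _ (sA3 _ hw)))
        (hVL _ (hVL _ hw)))
  have se : ∀ i j : Fin 3, ∀ w ∈ V, Matrix.single i j (1:ℂ) *ᵥ w ∈ V := by
    intro i j w hw
    rcases trich i with rfl | rfl | rfl <;> rcases trich j with rfl | rfl | rfl
    · exact sd 0 w hw
    · rw [o01, ← mulVec_mulVec]; exact sd 0 _ (hVL _ hw)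
    · rw [o02, neg_mulVec]
      exact V.neg_mem (by rw [← mulVec_mulVec]; exact sd 0 _ (sA1 _ hw))
    · rw [o10, neg_mulVec]
      exact V.neg_mem (by rw [← mulVec_mulVec]; exact sd 1 _ (hVL _ hw))
    · exact sd 1 w hw
    · rw [o12, neg_mulVec]
      exact V.neg_mem (by rw [← mulVec_mulVec]; exact sd 1 _ (sA3 _ hw))
    · rw [o20, ← mulVec_mulVec]; exact sd 2 _ (sA1 _ hw)
    · rw [o21, ← mulVec_mulVec]; exact sd 2 _ (sA3 _ hw)
    · exact sd 2 w hw
  obtain ⟨j, hj⟩ : ∃ j, v j ≠ 0 := by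
    by_contra h; push_neg at h; exact hv0 (funext h)
  have singmem : ∀ i : Fin 3, (Pi.single i 1 : Fin 3 → ℂ) ∈ V := by
    intro i
    have h1 : Matrix.single i j (1:ℂ) *ᵥ v = Pi.single i (v j) := by
      rw [single_mulVec]
      funext m
      rcases eq_or_ne m i with rfl | hm
      · simp
      · simp [Function.update_apply, hm, Pi.single_eq_of_ne hm]
    have h2 := se i j v hvV
    rw [h1] at h2
    have h3 : (Pi.single i 1 : Fin 3 → ℂ) = (v j)⁻¹ • (Pi.single i (v j) : Fin 3 → ℂ) := by
      rw [← Pi.single_smul, smul_eq_mul, inv_mul_cancel₀ hj]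
    rw [h3]
    exact V.smul_mem _ h2
  rw [eq_top_iff]
  intro w _
  have hw : w = w 0 • (Pi.single 0 1 : Fin 3 → ℂ) + w 1 • (Pi.single 1 1 : Fin 3 → ℂ) + w 2 • (Pi.single 2 1 : Fin 3 → ℂ) := by
    funext m
    rcases trich m with rfl | rfl | rfl <;> simp [Pi.single_apply]
  rw [hw]
  exact V.add_mem (V.add_mem (V.smul_mem _ (singmem 0)) (V.smul_mem _ (singmem 1)))
    (V.smul_mem _ (singmem 2))

end Larc18

open Larc18 in
/-- for `L = [[0,1,0],[-1,0,0],[0,0,0]]`,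
`G = [[-1/2,0,-1],[0,-1/2,0],[1,0,0]]` and `G̃ = G - (1/2)L²`, for each standard basis
vector `e_k` of `ℂ³` the span of `{A e_k : A in the Lie subalgebra generated by G̃, L}`
is two-dimensional and equals the span of the two other standard basis vectors; in
particular the Lie algebra rank condition fails even though the QMS is irreducible. -/
theorem example_3x3_larc_fails
    (L G Gt : Matrix (Fin 3) (Fin 3) ℂ)
    (hL : L = !![0, 1, 0; -1, 0, 0; 0, 0, 0])
    (hG : G = !![-1/2, 0, -1; 0, -1/2, 0; 1, 0, 0])
    (hGt : Gt = G - (1/2 : ℂ) • (L * L)) :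
    (∀ k : Fin 3,
      Submodule.span ℂ
          {v | ∃ A ∈ LieSubalgebra.lieSpan ℂ (Matrix (Fin 3) (Fin 3) ℂ) {Gt, L},
            v = A *ᵥ Pi.single k 1}
        = Submodule.span ℂ {v | ∃ i : Fin 3, i ≠ k ∧ v = (Pi.single i 1 : Fin 3 → ℂ)} ∧
      Module.finrank ℂ
        (Submodule.span ℂ
          {v | ∃ A ∈ LieSubalgebra.lieSpan ℂ (Matrix (Fin 3) (Fin 3) ℂ) {Gt, L},
            v = A *ᵥ Pi.single k 1}) = 2) ∧
    ¬ (∀ ξ : Fin 3 → ℂ, ξ ≠ 0 →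
        Submodule.span ℂ
          {v | ∃ A ∈ LieSubalgebra.lieSpan ℂ (Matrix (Fin 3) (Fin 3) ℂ) {Gt, L},
            v = A *ᵥ ξ} = ⊤) ∧
    (∀ V : Submodule ℂ (Fin 3 → ℂ),
      (∀ v ∈ V, G *ᵥ v ∈ V) → (∀ v ∈ V, L *ᵥ v ∈ V) → V = ⊥ ∨ V = ⊤) := by
  have eL : L = A2 := by rw [hL]; rfl
  have eG : G = AG := by
    rw [hG]; ext i j; fin_cases i <;> fin_cases j <;> norm_num [AG]
  have eGt : Gt = A1 := by
    rw [hGt, hG, hL]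
    ext i j; fin_cases i <;> fin_cases j <;>
      norm_num [A1, Matrix.mul_apply, Fin.sum_univ_three]
  clear hL hG hGt
  subst eL eG eGt
  refine ⟨fun k => ⟨span_eq k, ?_⟩, ?_, fun V hVG hVL => irr V hVG hVL⟩
  · rw [span_eq k]; exact rank_two k
  · intro hall
    have hx : (Pi.single 0 1 : Fin 3 → ℂ) ≠ 0 := by
      intro h
      have h0 := congrFun h 0
      simp at h0
    have htop := hall _ hx
    have h2 : Module.finrank ℂ
        (Submodule.span ℂ
          {v | ∃ A ∈ LieSubalgebra.lieSpan ℂ (Matrix (Fin 3) (Fin 3) ℂ) {A1, A2},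
            v = A *ᵥ Pi.single (0 : Fin 3) 1}) = 2 := by
      rw [span_eq 0]; exact rank_two 0
    rw [htop] at h2
    rw [finrank_top] at h2
    simp [Module.finrank_fin_fun] at h2
end
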